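/- arXiv:2507.23714 — 7 statements merged into one kernel-verified Lean document; each statement's English description precedes it below -/
import Mathlib

section
/- Let 𝔤 be a finite-dimensional real Lie algebra admitting a derivation D : 𝔤 → 𝔤 (a linear map with D[x,y] = [Dx,y] + [x,Dy] for all x,y) such that D ∘ D = c·id for some nonzero real number c. Then 𝔤 is abelian, i.e. [x,y] = 0 for all x,y ∈ 𝔤. -/
/-- A finite-dimensional real Lie algebra admitting a derivation whose square is a
nonzero multiple of the identity is abelian. -/
theorem stmt_0 (L : Type*) [LieRing L] [LieAlgebra ℝ L] [FiniteDimensional ℝ L]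
    (D : L →ₗ[ℝ] L)
    (hder : ∀ x y : L, D ⁅x, y⁆ = ⁅D x, y⁆ + ⁅x, D y⁆)
    (c : ℝ) (hc : c ≠ 0)
    (hsq : D ∘ₗ D = c • LinearMap.id) :
    ∀ x y : L, ⁅x, y⁆ = 0 := by
  have hDD : ∀ x : L, D (D x) = c • x := by
    intro x
    have := congrArg (fun f : L →ₗ[ℝ] L => f x) hsq
    simpa using this
  -- Key identity: 2⁅Dx,Dy⁆ = -c⁅x,y⁆
  have key : ∀ x y : L, (2 : ℝ) • ⁅D x, D y⁆ = (-c) • ⁅x, y⁆ := by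
    intro x y
    have h1 : D (D ⁅x, y⁆) = c • ⁅x, y⁆ := hDD _
    have h2 : D (D ⁅x, y⁆) =
        c • ⁅x, y⁆ + (2 : ℝ) • ⁅D x, D y⁆ + c • ⁅x, y⁆ := by
      rw [hder x y, map_add, hder, hder, hDD, hDD]
      simp [two_smul]
      abel
    rw [h1] at h2
    have : (0 : L) = (2 : ℝ) • ⁅D x, D y⁆ + c • ⁅x, y⁆ := by
      have := h2
      abel_nf at this ⊢
      linear_combination (norm := module) this
    linear_combination (norm := module) this.symm
  intro x y
  have h3 : (2 : ℝ) • ⁅D (D x), D (D y)⁆ = (-c) • ⁅D x, D y⁆ := key (D x) (D y)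
  rw [hDD, hDD] at h3
  have h4 : (2 : ℝ) • ((c * c) • ⁅x, y⁆) = (-c) • ⁅D x, D y⁆ := by
    rw [← h3]; simp [smul_smul, mul_comm, mul_left_comm]
  have h5 : (2 : ℝ) • ((2 : ℝ) • ((c * c) • ⁅x, y⁆)) = (-c) • ((-c) • ⁅x, y⁆) := by
    rw [h4, ← smul_comm, key]
  have h6 : ((4 * (c * c)) : ℝ) • ⁅x, y⁆ = ((c * c) : ℝ) • ⁅x, y⁆ := by
    have := h5
    simp only [smul_smul] at this
    convert this using 2 <;> ring
  have h7 : ((3 * (c * c)) : ℝ) • ⁅x, y⁆ = 0 := by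
    have := sub_eq_zero.mpr h6
    rw [← sub_smul] at this
    convert this using 2; ring
  have hne : (3 * (c * c) : ℝ) ≠ 0 := by positivity
  exact (smul_eq_zero.mp h7).resolve_left hne
end

section
/- Let V be a finite-dimensional real vector space with a nondegenerate symmetric bilinear form B and quadratic form Q(x) = B(x,x), let Cl(Q) be its Clifford algebra with canonical map ι : V → Cl(Q) (convention ι(x)² = Q(x)·1), and let Σ be a module over Cl(Q) which is a real vector space on which the scalars ℝ ⊆ Cl(Q) act by scalar multiplication. Let ψ ∈ Σ be nonzero and let f : V → V be a B-symmetric endomorphism such that ι(f(X))•ψ = ι(X)•ψ for all X ∈ V. Then Tr(f) = dim V; moreover, setting V_ψ := {X ∈ V : ι(X)•ψ = 0}, the endomorphism f preserves V_ψ and the induced endomorphism of the quotient V/V_ψ is the identity. -/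
open CliffordAlgebra

/-- If `ψ` is a nonzero spinor and `f` a `B`-symmetric endomorphism with
`ι (f X) • ψ = ι X • ψ` for all `X`, then `Tr f = dim V`, `f` preserves the annihilator
`V_ψ = {X | ι X • ψ = 0}`, and the induced endomorphism of `V ⧸ V_ψ` is the identity. -/
theorem stmt_2 (V : Type*) [AddCommGroup V] [Module ℝ V] [FiniteDimensional ℝ V]
    (B : LinearMap.BilinForm ℝ V) (hBsymm : ∀ x y : V, B x y = B y x)
    (hBnondeg : B.Nondegenerate)
    (Q : QuadraticForm ℝ V) (hQ : ∀ x : V, Q x = B x x)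
    (S : Type*) [AddCommGroup S] [Module ℝ S]
    [Module (CliffordAlgebra Q) S] [IsScalarTower ℝ (CliffordAlgebra Q) S]
    (ψ : S) (hψ : ψ ≠ 0)
    (f : V →ₗ[ℝ] V) (hfsymm : ∀ x y : V, B (f x) y = B x (f y))
    (hfψ : ∀ X : V, ι Q (f X) • ψ = ι Q X • ψ) :
    LinearMap.trace ℝ V f = (Module.finrank ℝ V : ℝ) ∧
    ∀ W : Submodule ℝ V, (∀ X : V, X ∈ W ↔ ι Q X • ψ = 0) →
      ∃ h : W ≤ W.comap f, Submodule.mapQ W W f h = LinearMap.id := by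
  set g : V →ₗ[ℝ] V := f - LinearMap.id with hg
  have hann : ∀ X : V, ι Q (g X) • ψ = 0 := by
    intro X
    have : g X = f X - X := rfl
    rw [this, map_sub, sub_smul, hfψ, sub_self]
  -- annihilator vectors are B-isotropic
  have hiso : ∀ u v : V, ι Q u • ψ = 0 → ι Q v • ψ = 0 → B u v = 0 := by
    intro u v hu hv
    have hmul := CliffordAlgebra.ι_mul_ι_add_swap (Q := Q) u v
    have h0 : (ι Q u * ι Q v + ι Q v * ι Q u) • ψ = 0 := by
      rw [add_smul, mul_smul, mul_smul, hu, hv, smul_zero, smul_zero, add_zero]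
    rw [hmul, algebraMap_smul] at h0
    have hpolar : QuadraticMap.polar Q u v = 0 := by
      rcases smul_eq_zero.mp h0 with h | h
      · exact h
      · exact absurd h hψ
    have : QuadraticMap.polar Q u v = 2 * B u v := by
      simp [QuadraticMap.polar, hQ, map_add, LinearMap.add_apply]
      rw [hBsymm v u]; ring
    rw [this] at hpolar
    linarith
  have hgsymm : ∀ x y : V, B (g x) y = B x (g y) := by
    intro x y
    have : g x = f x - x := rfl
    simp [this, show g y = f y - y from rfl, map_sub, hfsymm x y]
  have hg2 : ∀ y : V, g (g y) = 0 := by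
    intro y
    apply hBnondeg.1
    intro n
    rw [hgsymm (g y) n]
    exact hiso _ _ (hann y) (hann n)
  have hnil : IsNilpotent g := by
    refine ⟨2, ?_⟩
    ext y
    simp [pow_two, Module.End.mul_apply, hg2]
  have htr : LinearMap.trace ℝ V g = 0 :=
    (LinearMap.isNilpotent_trace_of_isNilpotent hnil).eq_zero
  constructor
  · have hf : f = LinearMap.id + g := by ext x; simp [hg]
    rw [hf, map_add, htr, add_zero, LinearMap.trace_id]
  · intro W hW
    have h : W ≤ W.comap f := by
      intro X hX
      simp only [Submodule.mem_comap]
      rw [hW] at hX ⊢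
      rw [hfψ, hX]
    refine ⟨h, ?_⟩
    apply Submodule.linearMap_qext
    ext x
    simp only [LinearMap.comp_apply, Submodule.mapQ_apply, Submodule.mkQ_apply,
      LinearMap.id_comp]
    rw [Submodule.Quotient.eq]
    exact (hW _).mpr (hann x)
end

section
/- Let 𝔤̃ be a finite-dimensional real Lie algebra with a nondegenerate symmetric bilinear form ⟨·,·⟩, with an orthogonal direct sum 𝔤̃ = 𝔤 ⊕ 𝔞 where 𝔤 is an ideal on which ⟨·,·⟩ restricts nondegenerately and 𝔞 is an abelian subalgebra, such that ad(a) is symmetric for every a ∈ 𝔞 (pseudo-Iwasawa condition); set φ_a := −ad(a). Let ∇ satisfy the Koszul identity 2⟨∇_x y, z⟩ = ⟨[x,y],z⟩ − ⟨[y,z],x⟩ + ⟨[z,x],y⟩, and define the curvature R(x,y) := ∇_x ∘ ∇_y − ∇_y ∘ ∇_x − ∇_{[x,y]} ∈ End(𝔤̃), where ∇_x denotes the endomorphism y ↦ ∇_x y. Then for all v, w ∈ 𝔤 and a, b ∈ 𝔞: R(v,a)w = −∇_{φ_a(v)} w and R(v,a)b = −φ_b(φ_a(v)). -/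
/-- Curvature formulas for a pseudo-Iwasawa standard decomposition `𝔤̃ = 𝔤 ⊕ 𝔞`:
for `v, w ∈ 𝔤`, `a, b ∈ 𝔞`, `R(v,a)w = −∇_{φ_a(v)} w` and `R(v,a)b = −φ_b(φ_a(v))`,
where `φ_a = −ad a` and `R(x,y) = ∇_x∇_y − ∇_y∇_x − ∇_{⁅x,y⁆}`. -/
theorem stmt_7 (L : Type*) [LieRing L] [LieAlgebra ℝ L] [FiniteDimensional ℝ L]
    (B : LinearMap.BilinForm ℝ L) (hBsymm : ∀ x y : L, B x y = B y x)
    (hBnondeg : B.Nondegenerate)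
    (G : LieIdeal ℝ L) (A : LieSubalgebra ℝ L)
    (hAabelian : ∀ a ∈ A, ∀ b ∈ A, ⁅a, b⁆ = 0)
    (hinf : G.toSubmodule ⊓ A.toSubmodule = ⊥)
    (hsup : G.toSubmodule ⊔ A.toSubmodule = ⊤)
    (horth : ∀ v ∈ G, ∀ a ∈ A, B v a = 0)
    (hIwasawa : ∀ a ∈ A, ∀ x y : L, B ⁅a, x⁆ y = B x ⁅a, y⁆)
    (nabla : L →ₗ[ℝ] L →ₗ[ℝ] L)
    (hKoszul : ∀ x y z : L,
      2 * B (nabla x y) z = B ⁅x, y⁆ z - B ⁅y, z⁆ x + B ⁅z, x⁆ y)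
    (R : L → L → L → L)
    (hR : ∀ x y z : L, R x y z = nabla x (nabla y z) - nabla y (nabla x z) - nabla ⁅x, y⁆ z) :
    (∀ v ∈ G, ∀ a ∈ A, ∀ w ∈ G, R v a w = -nabla (-⁅a, v⁆) w) ∧
    (∀ v ∈ G, ∀ a ∈ A, ∀ b ∈ A, R v a b = -(-⁅b, -⁅a, v⁆⁆)) := by
  -- extensionality from nondegeneracy
  have hext : ∀ x y : L, (∀ z : L, 2 * B x z = 2 * B y z) → x = y := by
    intro x y h
    have h0 : ∀ z, B (x - y) z = 0 := by
      intro z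
      have := h z
      simp only [map_sub, LinearMap.sub_apply]
      linarith
    exact sub_eq_zero.mp (hBnondeg.1 _ h0)
  -- ∇_a v = 0 for a ∈ A, v ∈ G
  have h_av : ∀ a ∈ A, ∀ v ∈ G, nabla a v = 0 := by
    intro a ha v hv
    apply hext
    intro z
    have key := hKoszul a v z
    have e1 : B ⁅v, z⁆ a = 0 := by
      have hmem : ⁅v, z⁆ ∈ G := by
        rw [show ⁅v, z⁆ = -⁅z, v⁆ from (lie_skew v z).symm ▸ rfl]
        exact neg_mem (G.lie_mem hv)
      exact horth _ hmem a ha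
    have e2 : B ⁅z, a⁆ v = - B ⁅a, v⁆ z := by
      rw [show ⁅z, a⁆ = -⁅a, z⁆ from (lie_skew z a).symm ▸ rfl, map_neg, LinearMap.neg_apply,
        hIwasawa a ha z v, hBsymm]
    simp only [map_zero, LinearMap.zero_apply, mul_zero]
    linarith
  -- ∇_a b = 0 for a, b ∈ A
  have h_ab : ∀ a ∈ A, ∀ b ∈ A, nabla a b = 0 := by
    intro a ha b hb
    apply hext
    intro z
    have key := hKoszul a b z
    have e0 : ⁅a, b⁆ = 0 := hAabelian a ha b hb
    have e1 : B ⁅b, z⁆ a = 0 := by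
      rw [hIwasawa b hb z a, hAabelian b hb a ha, map_zero]
    have e2 : B ⁅z, a⁆ b = 0 := by
      rw [show ⁅z, a⁆ = -⁅a, z⁆ from (lie_skew z a).symm ▸ rfl, map_neg, LinearMap.neg_apply,
        hIwasawa a ha z b, e0, map_zero, neg_zero]
    rw [e0] at key
    simp only [map_zero, LinearMap.zero_apply] at key
    simp only [map_zero, LinearMap.zero_apply, mul_zero]
    linarith
  -- ∇_a x = 0 for a ∈ A, any x
  have h_a0 : ∀ a ∈ A, ∀ x : L, nabla a x = 0 := by
    intro a ha x
    have hx : x ∈ G.toSubmodule ⊔ A.toSubmodule := by rw [hsup]; trivial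
    obtain ⟨g, hg, s, hs, rfl⟩ := Submodule.mem_sup.mp hx
    rw [map_add, h_av a ha g hg, h_ab a ha s hs, add_zero]
  -- ∇_v a = -⁅a, v⁆ for v ∈ G, a ∈ A
  have h_va : ∀ v ∈ G, ∀ a ∈ A, nabla v a = -⁅a, v⁆ := by
    intro v hv a ha
    apply hext
    intro z
    have key := hKoszul v a z
    have e1 : B ⁅z, v⁆ a = 0 := horth _ (G.lie_mem hv) a ha
    have e2 : B ⁅a, z⁆ v = B ⁅a, v⁆ z := by
      rw [hIwasawa a ha z v, hBsymm]
    have e3 : B ⁅v, a⁆ z = - B ⁅a, v⁆ z := by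
      rw [show ⁅v, a⁆ = -⁅a, v⁆ from (lie_skew v a).symm, map_neg, LinearMap.neg_apply]
    have e4 : B (-⁅a, v⁆) z = - B ⁅a, v⁆ z := by
      rw [map_neg, LinearMap.neg_apply]
    rw [e4]
    linarith
  constructor
  · intro v hv a ha w hw
    rw [hR, h_av a ha w hw, map_zero, h_a0 a ha (nabla v w)]
    have : ⁅v, a⁆ = -⁅a, v⁆ := (lie_skew v a).symm
    rw [this]
    abel
  · intro v hv a ha b hb
    have hmem : -⁅a, v⁆ ∈ G := neg_mem (G.lie_mem hv)
    rw [hR, h_ab a ha b hb, map_zero, h_a0 a ha (nabla v b)]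
    have : ⁅v, a⁆ = -⁅a, v⁆ := (lie_skew v a).symm
    rw [this, h_va _ hmem b hb]
    abel
end

section
/- Let 𝔤 be a finite-dimensional real nilpotent Lie algebra with a nondegenerate symmetric bilinear form g, let 𝔞 be a finite-dimensional abelian real Lie algebra with orthonormal basis {e_α} and ε_α = ±1, and let 𝔤̃ = 𝔤 ⋊ 𝔞 be a semidirect sum in which 𝔤 is an ideal and 𝔞 a subalgebra, endowed with the orthogonal metric g̃ = g ⊕ Σ_α ε_α e^α ⊗ e^α. Set φ_α := −ad(e_α)|_𝔤 : 𝔤 → 𝔤, let φ_α* be its g-adjoint and φ_α^s = ½(φ_α + φ_α*). Define the Levi-Civita product ∇̃ on (𝔤̃, g̃) by the Koszul identity, the curvature R̃(x,y) = ∇̃_x∇̃_y − ∇̃_y∇̃_x − ∇̃_{[x,y]}, and the Ricci form r̃ic(x,y) = tr(z ↦ R̃(z,x)y). Then for all v ∈ 𝔤 and all α, β: r̃ic(v, e_α) = ½ Tr( (ad v)|_𝔤 ∘ φ_α* ) and r̃ic(e_α, e_β) = −Tr( φ_α^s ∘ φ_β ), where Tr is the trace on 𝔤. -/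
open LinearMap Module

section TraceAux
variable {V : Type*} [AddCommGroup V] [Module ℝ V] [FiniteDimensional ℝ V]

omit [FiniteDimensional ℝ V] in
lemma trace_eq_sum_aux (B : LinearMap.BilinForm ℝ V) {ι : Type*} [Fintype ι] [DecidableEq ι]
    (c : Basis ι ℝ V) (d : ι → V)
    (hd : ∀ i j, B (c i) (d j) = if i = j then 1 else 0) (f : V →ₗ[ℝ] V) :
    LinearMap.trace ℝ V f = ∑ i, B (f (c i)) (d i) := by
  have hrepr : ∀ (x : V) (i : ι), c.repr x i = B x (d i) := by
    intro x i
    conv_rhs => rw [← c.sum_repr x]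
    rw [map_sum, LinearMap.sum_apply]
    simp only [map_smul, LinearMap.smul_apply, hd, smul_eq_mul, mul_ite, mul_one, mul_zero]
    simp
  rw [LinearMap.trace_eq_matrix_trace ℝ c f, Matrix.trace]
  simp only [Matrix.diag, LinearMap.toMatrix_apply, hrepr]

/-- Trace of a map equals trace of its B-adjoint. -/
lemma trace_adjoint_aux (B : LinearMap.BilinForm ℝ V) (hB : B.Nondegenerate)
    (hsymm : ∀ x y, B x y = B y x) (f h : V →ₗ[ℝ] V)
    (hfh : ∀ u w, B (f u) w = B u (h w)) :
    LinearMap.trace ℝ V f = LinearMap.trace ℝ V h := by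
  classical
  set b := Module.finBasis ℝ V
  set b' := B.dualBasis hB b with hb'
  have hd1 : ∀ i j, B (b i) (b' j) = if i = j then 1 else 0 := by
    intro i j; rw [hsymm, LinearMap.BilinForm.apply_dualBasis_left]
  have hd2 : ∀ i j, B (b' i) (b j) = if i = j then 1 else 0 := by
    intro i j
    rw [LinearMap.BilinForm.apply_dualBasis_left]
    simp [eq_comm]
  rw [trace_eq_sum_aux B b b' hd1 f, trace_eq_sum_aux B b' b hd2 h]
  refine Finset.sum_congr rfl fun i _ => ?_
  rw [hfh, hsymm]

/-- Trace of skew-adjoint composed with self-adjoint is zero. -/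
lemma trace_skew_comp_aux (B : LinearMap.BilinForm ℝ V) (hB : B.Nondegenerate)
    (hsymm : ∀ x y, B x y = B y x) (E S : V →ₗ[ℝ] V)
    (hE : ∀ u w, B (E u) w = -B (E w) u)
    (hS : ∀ u w, B (S u) w = B u (S w)) :
    LinearMap.trace ℝ V (E ∘ₗ S) = 0 := by
  have h1 : LinearMap.trace ℝ V (E ∘ₗ S) = LinearMap.trace ℝ V (-(S ∘ₗ E)) := by
    refine trace_adjoint_aux B hB hsymm _ _ fun u w => ?_
    have : B (E (S u)) w = -B u (S (E w)) := by
      rw [hE]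
      rw [hsymm (E w) (S u), hS]
    simpa using this
  have h2 : LinearMap.trace ℝ V (S ∘ₗ E) = LinearMap.trace ℝ V (E ∘ₗ S) := by
    rw [show S ∘ₗ E = S * E from rfl, show E ∘ₗ S = E * S from rfl, LinearMap.trace_mul_comm]
  rw [map_neg, h2] at h1
  linarith

/-- Existence of the operator representing a bilinear functional. -/
lemma exists_op_aux (B : LinearMap.BilinForm ℝ V) (hB : B.Nondegenerate)
    (F : V →ₗ[ℝ] V →ₗ[ℝ] ℝ) :
    ∃ E : V →ₗ[ℝ] V, ∀ u z, B (E u) z = F u z := by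
  refine ⟨(B.toDual hB).symm.toLinearMap ∘ₗ F, fun u z => ?_⟩
  have h1 : B.toDual hB ((B.toDual hB).symm (F u)) = F u := (B.toDual hB).apply_symm_apply _
  calc B ((B.toDual hB).symm.toLinearMap (F u)) z
      = B.toDual hB ((B.toDual hB).symm (F u)) z := (LinearMap.BilinForm.toDual_def hB).symm
    _ = F u z := by rw [h1]

end TraceAux

lemma trace_split_aux {L : Type*} [AddCommGroup L] [Module ℝ L] [FiniteDimensional ℝ L]
    (p q : Submodule ℝ L) (h : IsCompl p q) (T : L →ₗ[ℝ] L) :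
    LinearMap.trace ℝ L T
      = LinearMap.trace ℝ p ((p.linearProjOfIsCompl q h) ∘ₗ T ∘ₗ p.subtype)
      + LinearMap.trace ℝ q ((q.linearProjOfIsCompl p h.symm) ∘ₗ T ∘ₗ q.subtype) := by
  have hid : p.subtype ∘ₗ p.linearProjOfIsCompl q h
      + q.subtype ∘ₗ q.linearProjOfIsCompl p h.symm = LinearMap.id := by
    ext x
    simp only [LinearMap.add_apply, LinearMap.comp_apply, Submodule.subtype_apply, LinearMap.id_apply]
    exact Submodule.projection_add_projection_eq_self h x
  have hT : T = T ∘ₗ (p.subtype ∘ₗ p.linearProjOfIsCompl q h)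
      + T ∘ₗ (q.subtype ∘ₗ q.linearProjOfIsCompl p h.symm) := by
    rw [← comp_add, hid, comp_id]
  have h1 : LinearMap.trace ℝ L (T ∘ₗ (p.subtype ∘ₗ p.linearProjOfIsCompl q h))
      = LinearMap.trace ℝ p ((p.linearProjOfIsCompl q h) ∘ₗ T ∘ₗ p.subtype) := by
    rw [← comp_assoc, LinearMap.trace_comp_comm' (p.linearProjOfIsCompl q h) (T ∘ₗ p.subtype)]
  have h2 : LinearMap.trace ℝ L (T ∘ₗ (q.subtype ∘ₗ q.linearProjOfIsCompl p h.symm))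
      = LinearMap.trace ℝ q ((q.linearProjOfIsCompl p h.symm) ∘ₗ T ∘ₗ q.subtype) := by
    rw [← comp_assoc, LinearMap.trace_comp_comm' (q.linearProjOfIsCompl p h.symm) (T ∘ₗ q.subtype)]
  conv_lhs => rw [hT]
  rw [map_add, h1, h2]

lemma der_preserves_lcs {V : Type*} [LieRing V] [LieAlgebra ℝ V]
    (D : V →ₗ[ℝ] V) (hD : ∀ x y : V, D ⁅x, y⁆ = ⁅D x, y⁆ + ⁅x, D y⁆) :
    ∀ (k : ℕ) (x : V), x ∈ LieModule.lowerCentralSeries ℝ V V k →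
      D x ∈ LieModule.lowerCentralSeries ℝ V V k := by
  intro k
  induction k with
  | zero => intro x _; simp
  | succ k ih =>
    intro x hx
    rw [LieModule.lowerCentralSeries_succ] at hx ⊢
    rw [← LieSubmodule.mem_toSubmodule, LieSubmodule.lieIdeal_oper_eq_linear_span'] at hx
    refine Submodule.span_induction ?_ ?_ ?_ ?_ hx
    · rintro m ⟨a, -, n, hn, rfl⟩
      rw [hD]
      exact add_mem (LieSubmodule.lie_mem_lie (LieSubmodule.mem_top _) hn)
        (LieSubmodule.lie_mem_lie (LieSubmodule.mem_top _) (ih n hn))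
    · simpa using zero_mem
        (⁅(⊤ : LieIdeal ℝ V), LieModule.lowerCentralSeries ℝ V V k⁆ : LieSubmodule ℝ V V)
    · intro a b _ _ ha hb; rw [map_add]; exact add_mem ha hb
    · intro t a _ ha; rw [map_smul]; exact Submodule.smul_mem (LieSubmodule.toSubmodule _) t ha

lemma trace_ad_comp_aux {V : Type*} [LieRing V] [LieAlgebra ℝ V] [FiniteDimensional ℝ V]
    (hnilp : LieRing.IsNilpotent V) (v : V) (g : V →ₗ[ℝ] V)
    (hg : ∀ (k : ℕ) (x : V), x ∈ LieModule.lowerCentralSeries ℝ V V k →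
      g x ∈ LieModule.lowerCentralSeries ℝ V V k) :
    LinearMap.trace ℝ V ((LieAlgebra.ad ℝ V v) ∘ₗ g) = 0 := by
  set f := (LieAlgebra.ad ℝ V v) ∘ₗ g with hf
  have hstep : ∀ (k : ℕ) (x : V), x ∈ LieModule.lowerCentralSeries ℝ V V k →
      f x ∈ LieModule.lowerCentralSeries ℝ V V (k + 1) := by
    intro k x hx
    rw [LieModule.lowerCentralSeries_succ]
    exact LieSubmodule.lie_mem_lie (LieSubmodule.mem_top _) (hg k x hx)
  have hpow : ∀ (m : ℕ) (x : V), (f ^ m) x ∈ LieModule.lowerCentralSeries ℝ V V m := by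
    intro m
    induction m with
    | zero => intro x; simp
    | succ m ih =>
      intro x
      rw [pow_succ']
      exact hstep m _ (ih x)
  obtain ⟨n, hn⟩ := (LieModule.isNilpotent_iff ℝ V V).mp hnilp
  have hfn : f ^ n = 0 := by
    ext x
    have := hpow n x
    rw [hn] at this
    simpa using this
  exact ((LinearMap.isNilpotent_trace_of_isNilpotent ⟨n, hfn⟩).eq_zero)

lemma trace_ad_aux {V : Type*} [LieRing V] [LieAlgebra ℝ V] [FiniteDimensional ℝ V]
    (hnilp : LieRing.IsNilpotent V) (v : V) :
    LinearMap.trace ℝ V (LieAlgebra.ad ℝ V v) = 0 := by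
  have := trace_ad_comp_aux hnilp v LinearMap.id (fun k x hx => hx)
  simpa using this

/-- The Ricci form of the Koszul product `nabla` on a Lie algebra `L`:
`ricci nabla x y = tr (z ↦ R(z,x)y)` where `R(x,y) = ∇_x∇_y − ∇_y∇_x − ∇_{⁅x,y⁆}`. -/
noncomputable def ricci {L : Type*} [LieRing L] [LieAlgebra ℝ L]
    (nabla : L →ₗ[ℝ] L →ₗ[ℝ] L) (x y : L) : ℝ :=
  LinearMap.trace ℝ L
    (nabla.flip (nabla x y) - nabla x ∘ₗ nabla.flip y + nabla.flip y ∘ₗ LieAlgebra.ad ℝ L x)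

set_option maxHeartbeats 1000000 in
/-- Conti–Rossi Ricci formulas for a standard decomposition `𝔤̃ = 𝔤 ⋊ 𝔞`:
`r̃ic(v, e_α) = ½ Tr(ad v ∘ φ_α*)` and `r̃ic(e_α, e_β) = −Tr(φ_αˢ ∘ φ_β)`. -/
theorem stmt_9 (L : Type*) [LieRing L] [LieAlgebra ℝ L] [FiniteDimensional ℝ L]
    (Btilde : LinearMap.BilinForm ℝ L) (hBsymm : ∀ x y : L, Btilde x y = Btilde y x)
    (hBnondeg : Btilde.Nondegenerate)
    (G : LieIdeal ℝ L) (hGnilp : LieRing.IsNilpotent ↥G)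
    (hGnondeg : ∀ v ∈ G, (∀ w ∈ G, Btilde v w = 0) → v = 0)
    (k : ℕ) (e : Fin k → L) (ε : Fin k → ℝ) (hε : ∀ α, ε α = 1 ∨ ε α = -1)
    (hind : LinearIndependent ℝ e)
    (hsup : G.toSubmodule ⊔ Submodule.span ℝ (Set.range e) = ⊤)
    (hinf : G.toSubmodule ⊓ Submodule.span ℝ (Set.range e) = ⊥)
    (hAabelian : ∀ α β, ⁅e α, e β⁆ = 0)
    (horth : ∀ v ∈ G, ∀ α, Btilde v (e α) = 0)
    (horthA : ∀ α β, Btilde (e α) (e β) = if α = β then ε α else 0)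
    (φ : Fin k → (↥G →ₗ[ℝ] ↥G)) (hφ : ∀ α (v : ↥G), ((φ α v : L)) = -⁅e α, (v : L)⁆)
    (φs : Fin k → (↥G →ₗ[ℝ] ↥G))
    (hφs : ∀ α (v w : ↥G), Btilde (φs α v : L) (w : L) = Btilde (v : L) (φ α w : L))
    (nabla : L →ₗ[ℝ] L →ₗ[ℝ] L)
    (hKoszul : ∀ x y z : L,
      2 * Btilde (nabla x y) z = Btilde ⁅x, y⁆ z - Btilde ⁅y, z⁆ x + Btilde ⁅z, x⁆ y) :
    (∀ (v : ↥G) (α : Fin k),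
      ricci nabla (v : L) (e α)
        = (1/2 : ℝ) * LinearMap.trace ℝ ↥G (LieAlgebra.ad ℝ ↥G v ∘ₗ φs α)) ∧
    (∀ α β : Fin k,
      ricci nabla (e α) (e β)
        = -LinearMap.trace ℝ ↥G ((((1:ℝ)/2) • (φ α + φs α)) ∘ₗ φ β)) := by
  classical
  set A : Submodule ℝ L := Submodule.span ℝ (Set.range e) with hA
  have hcompl : IsCompl G.toSubmodule A :=
    ⟨disjoint_iff.mpr hinf, codisjoint_iff.mpr hsup⟩
  set pG : L →ₗ[ℝ] ↥G := (G.toSubmodule).linearProjOfIsCompl A hcompl with hpG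
  set pA : L →ₗ[ℝ] ↥A := A.linearProjOfIsCompl G.toSubmodule hcompl.symm with hpA
  set ιG : ↥G →ₗ[ℝ] L := G.toSubmodule.subtype with hιG
  -- the restricted bilinear form on G
  set BG : LinearMap.BilinForm ℝ ↥G := Btilde.compl₁₂ ιG ιG with hBGdef
  have hBG : ∀ u w : ↥G, BG u w = Btilde (u : L) (w : L) := fun u w => rfl
  have hBGsymm : ∀ u w : ↥G, BG u w = BG w u := fun u w => hBsymm _ _
  have hBGnd : BG.Nondegenerate := by
    refine ⟨fun u hu => ?_, fun u hu => ?_⟩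
    · have : (u : L) = 0 := hGnondeg u u.2 (fun w hw => hu ⟨w, hw⟩)
      exact Subtype.ext this
    · have : (u : L) = 0 := hGnondeg u u.2 (fun w hw => by rw [hBsymm]; exact hu ⟨w, hw⟩)
      exact Subtype.ext this
  -- orthogonality of A and G
  have hAG : ∀ x ∈ A, ∀ w ∈ G, Btilde x w = 0 := by
    intro x hx
    induction hx using Submodule.span_induction with
    | mem y hy =>
      obtain ⟨α, rfl⟩ := hy
      intro w hw
      rw [hBsymm]
      exact horth w hw α
    | zero => intro w hw; simp
    | add a b _ _ ha hb => intro w hw; rw [map_add, LinearMap.add_apply, ha w hw, hb w hw]; ring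
    | smul t a _ ha => intro w hw; rw [map_smul, LinearMap.smul_apply, ha w hw]; simp
  have hGA : ∀ w ∈ G, ∀ x ∈ A, Btilde w x = 0 := by
    intro w hw x hx; rw [hBsymm]; exact hAG x hx w hw
  -- extensionality via the bilinear form
  have key_ext : ∀ a b : L, (∀ w : ↥G, Btilde a (w : L) = Btilde b (w : L)) →
      (∀ α, Btilde a (e α) = Btilde b (e α)) → a = b := by
    intro a b h1 h2
    have hz : ∀ z : L, Btilde (a - b) z = 0 := by
      intro z
      have hzmem : z ∈ G.toSubmodule ⊔ A := by rw [hsup]; trivial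
      obtain ⟨g, hg, x, hx, rfl⟩ := Submodule.mem_sup.mp hzmem
      have hxA : Btilde a x = Btilde b x := by
        clear hzmem
        induction hx using Submodule.span_induction with
        | mem y hy => obtain ⟨α, rfl⟩ := hy; exact h2 α
        | zero => simp
        | add c d _ _ hc hd => rw [map_add, map_add, hc, hd]
        | smul t c _ hc => rw [map_smul, map_smul, hc]
      have hgG : Btilde a g = Btilde b g := h1 ⟨g, hg⟩
      rw [map_sub, LinearMap.sub_apply, map_add, map_add, hgG, hxA]
      ring
    exact sub_eq_zero.mp (hBnondeg.1 (a - b) (fun n => hz n))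
  -- bracket lemmas
  have hbr_ev : ∀ α (v : ↥G), ⁅e α, (v : L)⁆ = -((φ α v : ↥G) : L) := by
    intro α v; rw [hφ, neg_neg]
  have hbr_ve : ∀ (v : ↥G) α, ⁅(v : L), e α⁆ = ((φ α v : ↥G) : L) := by
    intro v α
    rw [← lie_skew, hbr_ev, neg_neg]
  have hmemG : ∀ (x : L) (v : ↥G), ⁅x, (v : L)⁆ ∈ G := fun x v => G.lie_mem v.2
  have hmemG' : ∀ (v : ↥G) (x : L), ⁅(v : L), x⁆ ∈ G := by
    intro v x
    rw [← lie_skew]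
    exact neg_mem (hmemG x v)
  have hbrGG : ∀ u w : ↥G, ⁅(u : L), (w : L)⁆ = ((⁅u, w⁆ : ↥G) : L) := fun u w => rfl
  have horth' : ∀ (v : ↥G) α, Btilde (v : L) (e α) = 0 := fun v α => horth v v.2 α
  have horth'' : ∀ α (v : ↥G), Btilde (e α) (v : L) = 0 := by
    intro α v; rw [hBsymm]; exact horth' v α
  -- halving
  have htwo : ∀ a b : ℝ, 2 * a = 2 * b → a = b := by intro a b h; linarith
  -- σ and τ
  set σ : Fin k → (↥G →ₗ[ℝ] ↥G) := fun α => ((1:ℝ)/2) • (φ α + φs α) with hσdef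
  set τ : Fin k → (↥G →ₗ[ℝ] ↥G) := fun α => ((1:ℝ)/2) • (φs α - φ α) with hτdef
  have hσcoe : ∀ α (u : ↥G), ((σ α u : ↥G) : L)
      = ((1:ℝ)/2) • ((φ α u : ↥G) : L) + ((1:ℝ)/2) • ((φs α u : ↥G) : L) := by
    intro α u
    simp [hσdef, smul_add]
  have hτcoe : ∀ α (u : ↥G), ((τ α u : ↥G) : L)
      = ((1:ℝ)/2) • ((φs α u : ↥G) : L) - ((1:ℝ)/2) • ((φ α u : ↥G) : L) := by
    intro α u
    simp [hτdef, smul_sub]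
  -- adjointness facts
  have hφsadj : ∀ α (u z : ↥G), BG (φs α u) z = BG u (φ α z) := by
    intro α u z
    rw [hBG, hφs, hBG]
  have hφadj : ∀ α (u z : ↥G), BG (φ α u) z = BG u (φs α z) := by
    intro α u z
    rw [hBGsymm (φ α u) z, hBGsymm u (φs α z)]
    exact (hφsadj α z u).symm
  have hσself : ∀ α (u z : ↥G), BG (σ α u) z = BG u (σ α z) := by
    intro α u z
    simp only [hσdef, LinearMap.smul_apply, LinearMap.add_apply, map_smul, map_add,
      LinearMap.smul_apply, LinearMap.add_apply, smul_eq_mul]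
    rw [hφadj, hφsadj]
    ring
  have hτskew : ∀ α (u z : ↥G), BG (τ α u) z = -BG (τ α z) u := by
    intro α u z
    simp only [hτdef, LinearMap.smul_apply, LinearMap.sub_apply, map_smul, map_sub,
      LinearMap.smul_apply, LinearMap.sub_apply, smul_eq_mul]
    rw [hφadj, hφsadj, hBGsymm u (φ α z), hBGsymm u (φs α z)]
    ring
  -- projection pairing
  have hpB : ∀ (x : L) (z : ↥G), BG (pG x) z = Btilde x (z : L) := by
    intro x z
    have hdec : ((pG x : ↥G) : L) + ((pA x : ↥A) : L) = x := by
      exact Submodule.projection_add_projection_eq_self hcompl x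
    conv_rhs => rw [← hdec]
    rw [map_add, LinearMap.add_apply, hAG _ (pA x).2 _ z.2, add_zero]
    rfl
  -- explicit formulas for nabla
  have hnab1 : ∀ (v : ↥G) α, nabla (v : L) (e α) = ((σ α v : ↥G) : L) := by
    intro v α
    refine key_ext _ _ (fun w => htwo _ _ ?_) (fun β => htwo _ _ ?_)
    · rw [hKoszul, hbr_ve, hbr_ev, horth _ (hmemG (w : L) v) α]
      simp only [map_neg, LinearMap.neg_apply, sub_neg_eq_add, add_zero]
      rw [hBsymm ((φ α w : ↥G) : L) ((v : ↥G) : L), ← hφs]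
      simp only [hσcoe, map_add, map_smul, LinearMap.add_apply, LinearMap.smul_apply,
        smul_eq_mul]
      ring
    · rw [hKoszul, hbr_ve, hAabelian, hbr_ev]
      simp only [map_zero, LinearMap.zero_apply, map_neg, LinearMap.neg_apply,
        horth' (φ α v) α, horth' (φ β v) α, horth' (σ α v) β]
      ring_nf
      simp [horth' (φ α v) β]
  have hnab2 : ∀ α β, nabla (e α) (e β) = 0 := by
    intro α β
    refine key_ext _ _ (fun w => htwo _ _ ?_) (fun γ => htwo _ _ ?_)
    · rw [hKoszul, hAabelian, hbr_ev, hbr_ve]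
      simp [horth']
    · rw [hKoszul, hAabelian, hAabelian, hAabelian]
      simp
  have hnab3 : ∀ α (v : ↥G), nabla (e α) (v : L) = ((τ α v : ↥G) : L) := by
    intro α v
    refine key_ext _ _ (fun w => htwo _ _ ?_) (fun β => htwo _ _ ?_)
    · rw [hKoszul, hbr_ev, horth _ (hmemG' v (w : L)) α, hbr_ve]
      simp only [map_neg, LinearMap.neg_apply, sub_zero]
      rw [hBsymm ((φ α w : ↥G) : L) ((v : ↥G) : L), ← hφs]
      simp only [hτcoe, map_sub, map_smul, LinearMap.sub_apply, LinearMap.smul_apply,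
        smul_eq_mul]
      ring
    · rw [hKoszul, hbr_ev, hbr_ve, hAabelian]
      simp [horth', horth' (τ α v) β]
  -- bases and dual bases on G
  set bG : Basis (Fin (Module.finrank ℝ ↥G)) ℝ ↥G := Module.finBasis ℝ ↥G with hbGdef
  set b' : Basis (Fin (Module.finrank ℝ ↥G)) ℝ ↥G := BG.dualBasis hBGnd bG with hb'def
  have hd1 : ∀ i j, BG (bG i) (b' j) = if i = j then 1 else 0 := by
    intro i j; rw [hBGsymm, hb'def, LinearMap.BilinForm.apply_dualBasis_left]
  have hd2 : ∀ i j, BG (b' i) (bG j) = if i = j then 1 else 0 := by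
    intro i j
    rw [hb'def, LinearMap.BilinForm.apply_dualBasis_left]
    simp [eq_comm]
  -- basis of A
  set bA : Basis (Fin k) ℝ ↥A := Basis.span hind with hbAdef
  have hbAe : ∀ i, ((bA i : ↥A) : L) = e i := fun i => congrArg Subtype.val (Module.Basis.span_apply hind i)
  -- A-part of traces vanishes when T maps e into G
  have hApartzero : ∀ T : L →ₗ[ℝ] L, (∀ i : Fin k, T (e i) ∈ G) →
      LinearMap.trace ℝ ↥A (pA ∘ₗ T ∘ₗ A.subtype) = 0 := by
    intro T hT
    have hz : pA ∘ₗ T ∘ₗ A.subtype = 0 := by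
      apply bA.ext; intro i
      rw [comp_apply, comp_apply]
      have h1 : A.subtype (bA i) = e i := hbAe i
      rw [h1, LinearMap.zero_apply]
      exact Submodule.projectionOnto_apply_right hcompl.symm ⟨_, hT i⟩
    rw [hz, map_zero]
  -- G-part operator identification
  have hGop : ∀ (T : L →ₗ[ℝ] L) (S : ↥G →ₗ[ℝ] ↥G), (∀ u : ↥G, T (u : L) = ((S u : ↥G) : L)) →
      pG ∘ₗ T ∘ₗ ιG = S := by
    intro T S h
    apply LinearMap.ext; intro u
    rw [comp_apply, comp_apply]
    have h1 : ιG u = (u : L) := rfl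
    rw [h1, h u]
    exact Submodule.linearProjOfIsCompl_apply_left hcompl (S u)
  -- skew operators from brackets
  have hEex : ∀ c : L, ∃ E : ↥G →ₗ[ℝ] ↥G,
      ∀ u z : ↥G, BG (E u) z = Btilde ⁅(u : L), (z : L)⁆ c := by
    intro c
    obtain ⟨E, hEp⟩ := exists_op_aux BG hBGnd
      (LinearMap.mk₂ ℝ (fun u z : ↥G => Btilde ⁅(u : L), (z : L)⁆ c)
        (by intro m m' z; simp [add_lie])
        (by intro t m z; simp [smul_lie])
        (by intro m z z'; simp [lie_add])
        (by intro t m z; simp [lie_smul]))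
    exact ⟨E, fun u z => hEp u z⟩
  have hEskew : ∀ (c : L) (E : ↥G →ₗ[ℝ] ↥G),
      (∀ u z : ↥G, BG (E u) z = Btilde ⁅(u : L), (z : L)⁆ c) →
      ∀ u z : ↥G, BG (E u) z = -BG (E z) u := by
    intro c E hE u z
    rw [hE, hE, ← lie_skew, map_neg, LinearMap.neg_apply]
  -- sum lemmas
  have hsum_ad1 : ∀ w : ↥G, ∑ i, Btilde ⁅((bG i : ↥G) : L), (w : L)⁆ ((b' i : ↥G) : L)
      = -LinearMap.trace ℝ ↥G (LieAlgebra.ad ℝ ↥G w) := by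
    intro w
    rw [trace_eq_sum_aux BG bG b' hd1, ← Finset.sum_neg_distrib]
    refine Finset.sum_congr rfl fun i _ => ?_
    rw [hbrGG, ← hBG, show (⁅bG i, w⁆ : ↥G) = -⁅w, bG i⁆ from (lie_skew _ _).symm]
    simp [LieAlgebra.ad_apply]
  have hsum_ad2 : ∀ w : ↥G, ∑ i, Btilde ⁅(w : L), ((b' i : ↥G) : L)⁆ ((bG i : ↥G) : L)
      = LinearMap.trace ℝ ↥G (LieAlgebra.ad ℝ ↥G w) := by
    intro w
    rw [trace_eq_sum_aux BG b' bG hd2]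
    refine Finset.sum_congr rfl fun i _ => ?_
    rw [hbrGG, ← hBG]
    simp [LieAlgebra.ad_apply]
  have hEtr : ∀ (c : L) (E : ↥G →ₗ[ℝ] ↥G),
      (∀ u z : ↥G, BG (E u) z = Btilde ⁅(u : L), (z : L)⁆ c) →
      LinearMap.trace ℝ ↥G E = 0 := by
    intro c E hE
    have h1 : LinearMap.trace ℝ ↥G E = LinearMap.trace ℝ ↥G (-E) := by
      refine trace_adjoint_aux BG hBGnd hBGsymm E (-E) fun u z => ?_
      rw [hEskew c E hE, hBGsymm]
      simp
    rw [map_neg] at h1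
    linarith
  have hsum_E : ∀ c : L, ∑ i, Btilde ⁅((b' i : ↥G) : L), ((bG i : ↥G) : L)⁆ c = 0 := by
    intro c
    obtain ⟨E, hE⟩ := hEex c
    have : ∑ i, Btilde ⁅((b' i : ↥G) : L), ((bG i : ↥G) : L)⁆ c
        = LinearMap.trace ℝ ↥G E := by
      rw [trace_eq_sum_aux BG b' bG hd2]
      exact Finset.sum_congr rfl fun i _ => (hE (b' i) (bG i)).symm
    rw [this, hEtr c E hE]
  -- trace splitting specialized
  have trace_splitG : ∀ T : L →ₗ[ℝ] L, LinearMap.trace ℝ L T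
      = LinearMap.trace ℝ ↥G (pG ∘ₗ T ∘ₗ ιG)
        + LinearMap.trace ℝ ↥A (pA ∘ₗ T ∘ₗ A.subtype) := by
    intro T
    exact trace_split_aux G.toSubmodule A hcompl T
  -- move σ across BG
  have hσmove : ∀ α (x y : ↥G), BG x (σ α y) = BG (σ α x) y := fun α x y => (hσself α x y).symm
  have hadtr : ∀ w : ↥G, LinearMap.trace ℝ ↥G (LieAlgebra.ad ℝ ↥G w) = 0 :=
    fun w => trace_ad_aux hGnilp w
  -- trace of z ↦ ∇_z w vanishes
  have tflip : ∀ w : ↥G, LinearMap.trace ℝ L (nabla.flip ((w : ↥G) : L)) = 0 := by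
    intro w
    rw [trace_splitG]
    have hA0 : LinearMap.trace ℝ ↥A (pA ∘ₗ nabla.flip ((w : ↥G) : L) ∘ₗ A.subtype) = 0 := by
      refine hApartzero _ fun i => ?_
      rw [LinearMap.flip_apply, hnab3]
      exact (τ i w).2
    rw [hA0, add_zero, trace_eq_sum_aux BG bG b' hd1]
    have hterm : ∀ i, BG ((pG ∘ₗ nabla.flip ((w : ↥G) : L) ∘ₗ ιG) (bG i)) (b' i)
        = (1/2 : ℝ) * (Btilde ⁅((bG i : ↥G) : L), (w : L)⁆ ((b' i : ↥G) : L)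
            - Btilde ⁅(w : L), ((b' i : ↥G) : L)⁆ ((bG i : ↥G) : L)
            + Btilde ⁅((b' i : ↥G) : L), ((bG i : ↥G) : L)⁆ (w : L)) := by
      intro i
      rw [comp_apply, comp_apply, hpB, show ιG (bG i) = ((bG i : ↥G) : L) from rfl,
        LinearMap.flip_apply]
      have := hKoszul ((bG i : ↥G) : L) (w : L) ((b' i : ↥G) : L)
      linarith
    rw [Finset.sum_congr rfl (fun i _ => hterm i), ← Finset.mul_sum,
      Finset.sum_add_distrib, Finset.sum_sub_distrib, hsum_ad1, hsum_ad2, hsum_E, hadtr]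
    ring
  -- trace of z ↦ ∇_v ∇_z (e α) vanishes
  have tterm2A : ∀ (v : ↥G) α,
      LinearMap.trace ℝ L (nabla (v : L) ∘ₗ nabla.flip (e α)) = 0 := by
    intro v α
    rw [trace_splitG]
    have hA0 : LinearMap.trace ℝ ↥A
        (pA ∘ₗ (nabla (v : L) ∘ₗ nabla.flip (e α)) ∘ₗ A.subtype) = 0 := by
      refine hApartzero _ fun i => ?_
      rw [comp_apply, LinearMap.flip_apply, hnab2, map_zero]
      exact zero_mem G
    rw [hA0, add_zero, trace_eq_sum_aux BG bG b' hd1]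
    have hterm : ∀ i, BG ((pG ∘ₗ (nabla (v : L) ∘ₗ nabla.flip (e α)) ∘ₗ ιG) (bG i)) (b' i)
        = (1/2 : ℝ) * (Btilde ⁅(v : L), ((σ α (bG i) : ↥G) : L)⁆ ((b' i : ↥G) : L)
            - Btilde ⁅((σ α (bG i) : ↥G) : L), ((b' i : ↥G) : L)⁆ (v : L)
            + Btilde ⁅((b' i : ↥G) : L), (v : L)⁆ ((σ α (bG i) : ↥G) : L)) := by
      intro i
      rw [comp_apply, comp_apply, comp_apply, show ιG (bG i) = ((bG i : ↥G) : L) from rfl,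
        LinearMap.flip_apply, hnab1, hpB]
      have := hKoszul (v : L) ((σ α (bG i) : ↥G) : L) ((b' i : ↥G) : L)
      linarith
    rw [Finset.sum_congr rfl (fun i _ => hterm i), ← Finset.mul_sum,
      Finset.sum_add_distrib, Finset.sum_sub_distrib]
    have hSa : ∑ i, Btilde ⁅(v : L), ((σ α (bG i) : ↥G) : L)⁆ ((b' i : ↥G) : L)
        = LinearMap.trace ℝ ↥G (LieAlgebra.ad ℝ ↥G v ∘ₗ σ α) := by
      rw [trace_eq_sum_aux BG bG b' hd1]
      refine Finset.sum_congr rfl fun i _ => ?_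
      rw [hbrGG, ← hBG]
      simp [LieAlgebra.ad_apply]
    have hSb : ∑ i, Btilde ⁅((σ α (bG i) : ↥G) : L), ((b' i : ↥G) : L)⁆ (v : L) = 0 := by
      obtain ⟨E, hE⟩ := hEex (v : L)
      have h1 : ∑ i, Btilde ⁅((σ α (bG i) : ↥G) : L), ((b' i : ↥G) : L)⁆ (v : L)
          = LinearMap.trace ℝ ↥G (E ∘ₗ σ α) := by
        rw [trace_eq_sum_aux BG bG b' hd1]
        exact Finset.sum_congr rfl fun i _ => (by rw [comp_apply, hE])
      rw [h1]
      exact trace_skew_comp_aux BG hBGnd hBGsymm E (σ α) (hEskew _ E hE) (hσself α)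
    have hSc : ∑ i, Btilde ⁅((b' i : ↥G) : L), (v : L)⁆ ((σ α (bG i) : ↥G) : L)
        = -LinearMap.trace ℝ ↥G (LieAlgebra.ad ℝ ↥G v ∘ₗ σ α) := by
      have h1 : ∀ i, Btilde ⁅((b' i : ↥G) : L), (v : L)⁆ ((σ α (bG i) : ↥G) : L)
          = -(BG ((σ α ∘ₗ LieAlgebra.ad ℝ ↥G v) (b' i)) (bG i)) := by
        intro i
        rw [hbrGG, ← hBG, show (⁅b' i, v⁆ : ↥G) = -⁅v, b' i⁆ from (lie_skew _ _).symm,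
          map_neg, LinearMap.neg_apply, hσmove α ⁅v, b' i⁆ (bG i)]
        simp [LieAlgebra.ad_apply]
      rw [Finset.sum_congr rfl (fun i _ => h1 i), Finset.sum_neg_distrib,
        ← trace_eq_sum_aux BG b' bG hd2]
      have : LinearMap.trace ℝ ↥G (σ α ∘ₗ LieAlgebra.ad ℝ ↥G v)
          = LinearMap.trace ℝ ↥G (LieAlgebra.ad ℝ ↥G v ∘ₗ σ α) := by
        rw [show σ α ∘ₗ LieAlgebra.ad ℝ ↥G v = σ α * LieAlgebra.ad ℝ ↥G v from rfl,
          show LieAlgebra.ad ℝ ↥G v ∘ₗ σ α = LieAlgebra.ad ℝ ↥G v * σ α from rfl,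
          LinearMap.trace_mul_comm]
      rw [this]
    rw [hSa, hSb, hSc]
    ring
  -- third term for mixed case
  have tterm3A : ∀ (v : ↥G) α,
      LinearMap.trace ℝ L (nabla.flip (e α) ∘ₗ LieAlgebra.ad ℝ L (v : L))
        = LinearMap.trace ℝ ↥G (σ α ∘ₗ LieAlgebra.ad ℝ ↥G v) := by
    intro v α
    rw [trace_splitG]
    have hA0 : LinearMap.trace ℝ ↥A
        (pA ∘ₗ (nabla.flip (e α) ∘ₗ LieAlgebra.ad ℝ L (v : L)) ∘ₗ A.subtype) = 0 := by
      refine hApartzero _ fun i => ?_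
      rw [comp_apply, LieAlgebra.ad_apply, hbr_ve v i, LinearMap.flip_apply, hnab1]
      exact (σ α (φ i v)).2
    rw [hA0, add_zero]
    have hop : pG ∘ₗ (nabla.flip (e α) ∘ₗ LieAlgebra.ad ℝ L (v : L)) ∘ₗ ιG
        = σ α ∘ₗ LieAlgebra.ad ℝ ↥G v := by
      refine hGop _ _ fun u => ?_
      rw [comp_apply, LieAlgebra.ad_apply, hbrGG, LinearMap.flip_apply, hnab1]
      simp [LieAlgebra.ad_apply]
    rw [hop]
  -- case B traces
  have tterm2B : ∀ α β,
      LinearMap.trace ℝ L (nabla (e α) ∘ₗ nabla.flip (e β)) = 0 := by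
    intro α β
    rw [trace_splitG]
    have hA0 : LinearMap.trace ℝ ↥A
        (pA ∘ₗ (nabla (e α) ∘ₗ nabla.flip (e β)) ∘ₗ A.subtype) = 0 := by
      refine hApartzero _ fun i => ?_
      rw [comp_apply, LinearMap.flip_apply, hnab2, map_zero]
      exact zero_mem G
    have hop : pG ∘ₗ (nabla (e α) ∘ₗ nabla.flip (e β)) ∘ₗ ιG = τ α ∘ₗ σ β := by
      refine hGop _ _ fun u => ?_
      rw [comp_apply, LinearMap.flip_apply, hnab1, hnab3]
      rfl
    rw [hA0, add_zero, hop]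
    exact trace_skew_comp_aux BG hBGnd hBGsymm (τ α) (σ β) (hτskew α) (hσself β)
  have tterm3B : ∀ α β,
      LinearMap.trace ℝ L (nabla.flip (e β) ∘ₗ LieAlgebra.ad ℝ L (e α))
        = -LinearMap.trace ℝ ↥G (σ β ∘ₗ φ α) := by
    intro α β
    rw [trace_splitG]
    have hA0 : LinearMap.trace ℝ ↥A
        (pA ∘ₗ (nabla.flip (e β) ∘ₗ LieAlgebra.ad ℝ L (e α)) ∘ₗ A.subtype) = 0 := by
      refine hApartzero _ fun i => ?_
      rw [comp_apply, LieAlgebra.ad_apply, hAabelian, LinearMap.flip_apply, map_zero,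
        LinearMap.zero_apply]
      exact zero_mem G
    have hop : pG ∘ₗ (nabla.flip (e β) ∘ₗ LieAlgebra.ad ℝ L (e α)) ∘ₗ ιG
        = -(σ β ∘ₗ φ α) := by
      refine hGop _ _ fun u => ?_
      rw [comp_apply, LieAlgebra.ad_apply, hbr_ev α u, LinearMap.flip_apply, map_neg,
        LinearMap.neg_apply, hnab1]
      simp
    rw [hA0, add_zero, hop, map_neg]
  -- derivation property of φ
  have hφder : ∀ α (x y : ↥G), φ α ⁅x, y⁆ = ⁅φ α x, y⁆ + ⁅x, φ α y⁆ := by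
    intro α x y
    apply Subtype.ext
    have h1 : ((φ α ⁅x, y⁆ : ↥G) : L) = -⁅e α, ⁅(x : L), (y : L)⁆⁆ := by
      rw [hφ, hbrGG]
    rw [h1]
    have h2 : ((⁅φ α x, y⁆ + ⁅x, φ α y⁆ : ↥G) : L)
        = ⁅-⁅e α, (x : L)⁆, (y : L)⁆ + ⁅(x : L), -⁅e α, (y : L)⁆⁆ := by
      push_cast [← hbrGG]
      rw [hφ, hφ]
    rw [h2, neg_lie, lie_neg, leibniz_lie]
    abel
  have hadφ0 : ∀ (v : ↥G) α,
      LinearMap.trace ℝ ↥G (LieAlgebra.ad ℝ ↥G v ∘ₗ φ α) = 0 := by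
    intro v α
    exact trace_ad_comp_aux hGnilp v (φ α) (der_preserves_lcs (φ α) (hφder α))
  -- assembling
  constructor
  · intro v α
    unfold ricci
    rw [map_add, map_sub, hnab1 v α, tflip (σ α v), tterm2A v α, tterm3A v α]
    have hcomm : LinearMap.trace ℝ ↥G (σ α ∘ₗ LieAlgebra.ad ℝ ↥G v)
        = LinearMap.trace ℝ ↥G (LieAlgebra.ad ℝ ↥G v ∘ₗ σ α) := by
      rw [show σ α ∘ₗ LieAlgebra.ad ℝ ↥G v = σ α * LieAlgebra.ad ℝ ↥G v from rfl,
        show LieAlgebra.ad ℝ ↥G v ∘ₗ σ α = LieAlgebra.ad ℝ ↥G v * σ α from rfl,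
        LinearMap.trace_mul_comm]
    have hexp : LieAlgebra.ad ℝ ↥G v ∘ₗ σ α
        = ((1:ℝ)/2) • (LieAlgebra.ad ℝ ↥G v ∘ₗ φ α)
          + ((1:ℝ)/2) • (LieAlgebra.ad ℝ ↥G v ∘ₗ φs α) := by
      apply LinearMap.ext; intro u
      simp [hσdef, smul_add]
    rw [hcomm, hexp, map_add, map_smul, map_smul, hadφ0 v α]
    simp only [smul_eq_mul]
    ring
  · intro α β
    unfold ricci
    rw [map_add, map_sub, hnab2 α β, map_zero, map_zero, tterm2B α β, tterm3B α β]
    have key : LinearMap.trace ℝ ↥G (σ β ∘ₗ φ α)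
        = LinearMap.trace ℝ ↥G ((((1:ℝ)/2) • (φ α + φs α)) ∘ₗ φ β) := by
      have e1 : σ β ∘ₗ φ α = ((1:ℝ)/2) • (φ β ∘ₗ φ α) + ((1:ℝ)/2) • (φs β ∘ₗ φ α) := by
        apply LinearMap.ext; intro u; simp [hσdef, smul_add]
      have e2 : (((1:ℝ)/2) • (φ α + φs α)) ∘ₗ φ β
          = ((1:ℝ)/2) • (φ α ∘ₗ φ β) + ((1:ℝ)/2) • (φs α ∘ₗ φ β) := by
        apply LinearMap.ext; intro u; simp [smul_add]
      have t1 : LinearMap.trace ℝ ↥G (φ β ∘ₗ φ α) = LinearMap.trace ℝ ↥G (φ α ∘ₗ φ β) := by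
        rw [show φ β ∘ₗ φ α = φ β * φ α from rfl, show φ α ∘ₗ φ β = φ α * φ β from rfl,
          LinearMap.trace_mul_comm]
      have t2 : LinearMap.trace ℝ ↥G (φs β ∘ₗ φ α) = LinearMap.trace ℝ ↥G (φs α ∘ₗ φ β) := by
        refine trace_adjoint_aux BG hBGnd hBGsymm _ _ fun u z => ?_
        rw [comp_apply, comp_apply, hφsadj β (φ α u) z, hφadj α u (φ β z)]
      rw [e1, e2, map_add, map_add, map_smul, map_smul, map_smul, map_smul, t1, t2]
    rw [key]
    ring
end

section
/- Let 𝔤 be a finite-dimensional real nilpotent Lie algebra with a nondegenerate symmetric bilinear form g, let 𝔞 be abelian with orthonormal basis {e_α}, ε_α = ±1, and let 𝔤̃ = 𝔤 ⋊ 𝔞 with orthogonal metric g̃ = g ⊕ Σ_α ε_α e^α ⊗ e^α be pseudo-Iwasawa, i.e. each φ_α := −ad(e_α)|_𝔤 is g-symmetric. Define the Ricci forms r̃ic of (𝔤̃, g̃) and ric of (𝔤, g) via the Koszul product, its curvature R(x,y) = ∇_x∇_y − ∇_y∇_x − ∇_{[x,y]}, and ric(x,y) = tr(z ↦ R(z,x)y).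 Suppose the metric is Einstein: r̃ic(x,y) = λ·g̃(x,y) for all x, y ∈ 𝔤̃ and some real λ. Then the Ricci operator Ric of (𝔤, g), defined by g(Ric(v), w) = ric(v,w), satisfies Ric = λ·id_𝔤 + D, where D := Σ_α ε_α Tr(φ_α)·φ_α, and D is a derivation of the Lie algebra 𝔤. -/
lemma trace_smulRight_aux {V : Type*} [AddCommGroup V] [Module ℝ V]
    [Module.Finite ℝ V] [Module.Free ℝ V] (f : V →ₗ[ℝ] ℝ) (u : V) :
    LinearMap.trace ℝ V (f.smulRight u) = f u := by
  have h1 : f.smulRight u = (LinearMap.toSpanSingleton ℝ V u) ∘ₗ f := by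
    ext x; simp [LinearMap.toSpanSingleton_apply]
  rw [h1, LinearMap.trace_comp_comm']
  have h2 : (f ∘ₗ LinearMap.toSpanSingleton ℝ V u) = (f u) • (LinearMap.id : ℝ →ₗ[ℝ] ℝ) := by
    ext
    simp [LinearMap.toSpanSingleton_apply, mul_comm]
  rw [h2, map_smul, LinearMap.trace_id, smul_eq_mul, Module.finrank_self]
  ring


set_option maxHeartbeats 2000000 in
/-- The nilsoliton equation: a pseudo-Iwasawa Einstein solvmanifold `𝔤̃ = 𝔤 ⋊ 𝔞` induces
on its nilpotent part the equation `Ric = λ id + D` with `D = Σ_α ε_α Tr(φ_α) φ_α`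
a derivation of `𝔤`. -/
theorem stmt_10 (L : Type*) [LieRing L] [LieAlgebra ℝ L] [FiniteDimensional ℝ L]
    (Btilde : LinearMap.BilinForm ℝ L) (hBsymm : ∀ x y : L, Btilde x y = Btilde y x)
    (hBnondeg : Btilde.Nondegenerate)
    (G : LieIdeal ℝ L) (hGnilp : LieRing.IsNilpotent ↥G)
    (hGnondeg : ∀ v ∈ G, (∀ w ∈ G, Btilde v w = 0) → v = 0)
    (k : ℕ) (e : Fin k → L) (ε : Fin k → ℝ) (hε : ∀ α, ε α = 1 ∨ ε α = -1)
    (hind : LinearIndependent ℝ e)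
    (hsup : G.toSubmodule ⊔ Submodule.span ℝ (Set.range e) = ⊤)
    (hinf : G.toSubmodule ⊓ Submodule.span ℝ (Set.range e) = ⊥)
    (hAabelian : ∀ α β, ⁅e α, e β⁆ = 0)
    (horth : ∀ v ∈ G, ∀ α, Btilde v (e α) = 0)
    (horthA : ∀ α β, Btilde (e α) (e β) = if α = β then ε α else 0)
    (φ : Fin k → (↥G →ₗ[ℝ] ↥G)) (hφ : ∀ α (v : ↥G), ((φ α v : L)) = -⁅e α, (v : L)⁆)
    -- pseudo-Iwasawa condition: each `φ_α` is `g`-symmetric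
    (hIwasawa : ∀ α (v w : ↥G), Btilde (φ α v : L) (w : L) = Btilde (v : L) (φ α w : L))
    (nabla : L →ₗ[ℝ] L →ₗ[ℝ] L)
    (hKoszul : ∀ x y z : L,
      2 * Btilde (nabla x y) z = Btilde ⁅x, y⁆ z - Btilde ⁅y, z⁆ x + Btilde ⁅z, x⁆ y)
    (nablaG : ↥G →ₗ[ℝ] ↥G →ₗ[ℝ] ↥G)
    (hKoszulG : ∀ x y z : ↥G,
      2 * Btilde (nablaG x y : L) (z : L)
        = Btilde (⁅x, y⁆ : L) (z : L) - Btilde (⁅y, z⁆ : L) (x : L)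
          + Btilde (⁅z, x⁆ : L) (y : L))
    -- the metric is Einstein with Einstein constant `lam`
    (lam : ℝ) (hEinstein : ∀ x y : L, ricci nabla x y = lam * Btilde x y)
    -- the Ricci operator of `(𝔤, g)`
    (Ricop : ↥G →ₗ[ℝ] ↥G)
    (hRicop : ∀ v w : ↥G, Btilde (Ricop v : L) (w : L) = ricci nablaG v w) :
    Ricop = lam • LinearMap.id + ∑ α, (ε α * LinearMap.trace ℝ ↥G (φ α)) • φ α ∧
    (∀ v w : ↥G,
      (∑ α, (ε α * LinearMap.trace ℝ ↥G (φ α)) • φ α) ⁅v, w⁆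
        = ⁅(∑ α, (ε α * LinearMap.trace ℝ ↥G (φ α)) • φ α) v, w⁆
          + ⁅v, (∑ α, (ε α * LinearMap.trace ℝ ↥G (φ α)) • φ α) w⁆) := by
  classical
  -- basic facts
  have hε2 : ∀ α, ε α * ε α = 1 := by
    intro α; rcases hε α with h | h <;> rw [h] <;> norm_num
  have hGbr : ∀ x y : ↥G, ((⁅x, y⁆ : ↥G) : L) = ⁅(x : L), (y : L)⁆ := fun x y => rfl
  have hbr : ∀ α (v : ↥G), ⁅e α, (v : L)⁆ = -(φ α v : L) := by
    intro α v; rw [hφ, neg_neg]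
  have hbr2 : ∀ α (v : ↥G), ⁅(v : L), e α⁆ = (φ α v : L) := by
    intro α v; rw [← lie_skew, hbr, neg_neg]
  have horth' : ∀ α (v : ↥G), Btilde (e α) (v : L) = 0 := by
    intro α v; rw [hBsymm]; exact horth v v.2 α
  have horthG : ∀ α (v : ↥G), Btilde (v : L) (e α) = 0 := fun α v => horth v v.2 α
  -- the coordinate functionals and projection
  set q : Fin k → (L →ₗ[ℝ] ℝ) := fun α => ε α • Btilde.flip (e α) with hq
  have hq_apply : ∀ α x, q α x = ε α * Btilde x (e α) := by intro α x; simp [hq]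
  -- decomposition
  have hdec : ∀ x : L, x - ∑ α, q α x • e α ∈ G := by
    intro x
    have hx : x ∈ G.toSubmodule ⊔ Submodule.span ℝ (Set.range e) := by
      rw [hsup]; trivial
    obtain ⟨v, hv, s, hs, rfl⟩ := Submodule.mem_sup.mp hx
    obtain ⟨c, rfl⟩ := Submodule.mem_span_range_iff_exists_fun ℝ |>.mp hs
    have hqc : ∀ α, q α (v + ∑ i, c i • e i) = c α := by
      intro α
      have : Btilde (v + ∑ i, c i • e i) (e α) = c α * ε α := by
        rw [map_add, LinearMap.add_apply]
        rw [horth v hv α]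
        simp only [map_sum, map_smul, LinearMap.sum_apply, LinearMap.smul_apply]
        rw [Finset.sum_eq_single α]
        · rw [horthA α α]; simp [smul_eq_mul]
        · intro b _ hb; rw [horthA b α]; simp [hb]
        · intro h; exact absurd (Finset.mem_univ α) h
      rw [hq_apply, this]
      rcases hε α with h | h <;> rw [h] <;> ring
    have : (v + ∑ i, c i • e i) - ∑ α, q α (v + ∑ i, c i • e i) • e α = v := by
      simp only [hqc]; abel
    rw [this]; exact hv
  set p : L →ₗ[ℝ] L := LinearMap.id - ∑ α, (q α).smulRight (e α) with hp
  have hp_apply : ∀ x, p x = x - ∑ α, q α x • e α := by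
    intro x; simp [hp, LinearMap.sum_apply]
  have hp_apply : ∀ x, p x = x - ∑ α, q α x • e α := by
    intro x; simp [hp, LinearMap.sum_apply]
  have hpmem : ∀ x, p x ∈ G.toSubmodule := by intro x; rw [hp_apply]; exact hdec x
  set pG : L →ₗ[ℝ] ↥G := p.codRestrict G.toSubmodule hpmem with hpG
  have hpG_coe : ∀ x, ((pG x : L)) = p x := fun x => rfl
  set ι : ↥G →ₗ[ℝ] L := G.toSubmodule.subtype with hι
  have hpe : ∀ α, p (e α) = 0 := by
    intro β
    rw [hp_apply]
    have : ∀ α, q α (e β) = if β = α then 1 else 0 := by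
      intro α
      rw [hq_apply, horthA β α]
      split_ifs with h
      · subst h; exact hε2 β
      · ring
    simp only [this]; simp
  have hpv : ∀ v : ↥G, p (v : L) = v := by
    intro v
    rw [hp_apply]
    have : ∀ α, q α (v : L) = 0 := by
      intro α; rw [hq_apply, horthG α v]; ring
    simp only [this]; simp
  -- trace decomposition
  have htr : ∀ T : L →ₗ[ℝ] L, LinearMap.trace ℝ L T
      = LinearMap.trace ℝ ↥G (pG ∘ₗ T ∘ₗ ι) + ∑ α, ε α * Btilde (T (e α)) (e α) := by
    intro T
    have hsplit : T = ι ∘ₗ (pG ∘ₗ T) + ∑ α, ((q α) ∘ₗ T).smulRight (e α) := by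
      ext x
      have h1 : (ι ∘ₗ (pG ∘ₗ T)) x = p (T x) := rfl
      simp only [LinearMap.add_apply, LinearMap.sum_apply, h1, hp_apply,
        LinearMap.coe_comp, Function.comp_apply, LinearMap.smulRight_apply]
      abel
    conv_lhs => rw [hsplit]
    rw [map_add, map_sum]
    congr 1
    · rw [LinearMap.trace_comp_comm', LinearMap.comp_assoc]
    · refine Finset.sum_congr rfl (fun α _ => ?_)
      rw [trace_smulRight_aux]
      simp [hq_apply]
  -- uniqueness from nondegeneracy
  have huniq : ∀ x y : L, (∀ z : ↥G, Btilde x (z : L) = Btilde y (z : L)) →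
      (∀ α, Btilde x (e α) = Btilde y (e α)) → x = y := by
    intro x y h1 h2
    have : ∀ z : L, Btilde (x - y) z = 0 := by
      intro z
      have hz : z ∈ G.toSubmodule ⊔ Submodule.span ℝ (Set.range e) := by rw [hsup]; trivial
      obtain ⟨a, ha, s, hs, rfl⟩ := Submodule.mem_sup.mp hz
      obtain ⟨c, rfl⟩ := Submodule.mem_span_range_iff_exists_fun ℝ |>.mp hs
      have hxa : Btilde x a = Btilde y a := h1 ⟨a, ha⟩
      simp only [map_sub, LinearMap.sub_apply, map_add, LinearMap.add_apply, map_sum,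
        LinearMap.sum_apply, map_smul, LinearMap.smul_apply]
      rw [hxa]
      have : ∀ i, Btilde x (e i) = Btilde y (e i) := h2
      simp only [this]
      simp
    exact sub_eq_zero.mp (hBnondeg.1 (x - y) this)
  -- brackets of G-elements stay in G
  have hmem2 : ∀ v w : ↥G, ⁅(v : L), (w : L)⁆ ∈ G := by
    intro v w; rw [← hGbr]; exact (⁅v, w⁆ : ↥G).2
  have hB2 : ∀ a b : ℝ, 2 * a = 2 * b → a = b := by intro a b h; linarith
  -- formula for nabla on G × G
  have hN1 : ∀ v w : ↥G, nabla (v : L) (w : L)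
      = ((nablaG v w : L)) - ∑ α, (ε α * Btilde (φ α v : L) (w : L)) • e α := by
    intro v w
    apply huniq
    · intro z
      have hK := hKoszul (v : L) (w : L) (z : L)
      have hKG := hKoszulG v w z
      simp only [LieIdeal.coe_bracket_of_module] at hKG
      rw [← hGbr v w] at hK
      have h2 : 2 * Btilde (nabla (v : L) (w : L)) (z : L)
          = 2 * Btilde ((nablaG v w : L)) (z : L) := by
        rw [hK, hKG, hGbr]
      have h3 := hB2 _ _ h2
      rw [h3]
      simp only [map_sub, map_sum, LinearMap.sub_apply, LinearMap.sum_apply, map_smul,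
        LinearMap.smul_apply]
      have : ∀ α, Btilde (e α) (z : L) = 0 := fun α => horth' α z
      simp [this]
    · intro β
      have hK := hKoszul (v : L) (w : L) (e β)
      rw [hbr2 β w, hbr β v] at hK
      have e1 : Btilde ⁅(v : L), (w : L)⁆ (e β) = 0 := horth _ (hmem2 v w) β
      have e2 : Btilde (φ β w : L) (v : L) = Btilde (φ β v : L) (w : L) := by
        rw [hIwasawa β w v, hBsymm]
      rw [e1, e2, map_neg, LinearMap.neg_apply] at hK
      have hR : Btilde (((nablaG v w : L)) - ∑ α, (ε α * Btilde (φ α v : L) (w : L)) • e α) (e β)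
          = -Btilde (φ β v : L) (w : L) := by
        simp only [map_sub, map_sum, LinearMap.sub_apply, LinearMap.sum_apply, map_smul,
          LinearMap.smul_apply]
        rw [horthG β (nablaG v w)]
        rw [Finset.sum_eq_single β]
        · rw [horthA β β]; simp only [smul_eq_mul, if_true, eq_self_iff_true]
          rcases hε β with h | h <;> rw [h] <;> ring
        · intro b _ hb; rw [horthA b β]; simp [hb]
        · intro h; exact absurd (Finset.mem_univ β) h
      rw [hR]
      linarith
  -- nabla (e α) kills everything
  have hN2 : ∀ α (v : ↥G), nabla (e α) (v : L) = 0 := by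
    intro α v
    apply huniq
    · intro z
      have hK := hKoszul (e α) (v : L) (z : L)
      rw [hbr α v, hbr2 α z] at hK
      have e1 : Btilde ⁅(v : L), (z : L)⁆ (e α) = 0 := horth _ (hmem2 v z) α
      have e2 : Btilde (φ α z : L) (v : L) = Btilde (φ α v : L) (z : L) := by
        rw [hIwasawa α z v, hBsymm]
      rw [e1, e2, map_neg, LinearMap.neg_apply] at hK
      simp only [map_zero, LinearMap.zero_apply]
      linarith
    · intro β
      have hK := hKoszul (e α) (v : L) (e β)
      rw [hbr α v, hbr2 β v, hAabelian β α] at hK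
      rw [map_neg, LinearMap.neg_apply, horthG β (φ α v), horthG α (φ β v), map_zero] at hK
      simp only [map_zero, LinearMap.zero_apply]
      simp at hK
      linarith
  have hN3 : ∀ α (v : ↥G), nabla (v : L) (e α) = (φ α v : L) := by
    intro α v
    apply huniq
    · intro z
      have hK := hKoszul (v : L) (e α) (z : L)
      rw [hbr2 α v, hbr α z] at hK
      have e1 : Btilde ⁅(z : L), (v : L)⁆ (e α) = 0 := horth _ (hmem2 z v) α
      have e2 : Btilde (φ α z : L) (v : L) = Btilde (φ α v : L) (z : L) := by
        rw [hIwasawa α z v, hBsymm]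
      rw [e1, map_neg, LinearMap.neg_apply, e2] at hK
      linarith
    · intro β
      have hK := hKoszul (v : L) (e α) (e β)
      rw [hbr2 α v, hAabelian α β, hbr β v] at hK
      simp only [map_zero, LinearMap.zero_apply, map_neg, LinearMap.neg_apply,
        horthG β (φ α v), horthG α (φ β v), sub_zero, neg_zero, add_zero] at hK
      rw [horthG β (φ α v)]
      linarith
  have hN4 : ∀ α β, nabla (e α) (e β) = 0 := by
    intro α β
    apply huniq
    · intro z
      have hK := hKoszul (e α) (e β) (z : L)
      rw [hAabelian α β, hbr β z, hbr2 α z] at hK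
      rw [map_zero, LinearMap.zero_apply, map_neg, LinearMap.neg_apply,
        horthG α (φ β z), horthG β (φ α z)] at hK
      simp only [map_zero, LinearMap.zero_apply]
      simp at hK
      linarith
    · intro γ
      have hK := hKoszul (e α) (e β) (e γ)
      rw [hAabelian α β, hAabelian β γ, hAabelian γ α] at hK
      simp only [map_zero, LinearMap.zero_apply] at hK
      simp only [map_zero, LinearMap.zero_apply]
      linarith
  -- main comparison of Ricci forms
  have hric : ∀ v w : ↥G, ricci nabla (v : L) (w : L)
      = ricci nablaG v w
        - ∑ β, (ε β * LinearMap.trace ℝ ↥G (φ β)) * Btilde (φ β v : L) (w : L) := by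
    intro v w
    set Tmap : L →ₗ[ℝ] L :=
      nabla.flip (nabla (v : L) (w : L)) - nabla (v : L) ∘ₗ nabla.flip (w : L)
        + nabla.flip (w : L) ∘ₗ LieAlgebra.ad ℝ L (v : L) with hT
    have hTapp : ∀ x : L,
        Tmap x = nabla x (nabla (v : L) (w : L)) - nabla (v : L) (nabla x (w : L))
          + nabla ⁅(v : L), x⁆ (w : L) := by
      intro x
      simp [hT, LieAlgebra.ad_apply]
    have hricciT : ricci nabla (v : L) (w : L) = LinearMap.trace ℝ L Tmap := rfl
    -- the e-part of the trace
    have hTe : ∀ α, Btilde (Tmap (e α)) (e α)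
        = -((ε α * Btilde (φ α (φ α v) : L) (w : L)) * ε α) := by
      intro α
      have h1 : Tmap (e α) = nabla ((φ α v : L)) (w : L) := by
        rw [hTapp, hN1 v w, hbr2 α v]
        simp only [map_sub, map_sum, map_smul, hN2, hN4, smul_zero, sub_zero,
          Finset.sum_const_zero, map_zero, zero_sub, neg_zero, sub_zero]
        abel
      rw [h1, hN1 (φ α v) w]
      simp only [map_sub, LinearMap.sub_apply, map_sum, LinearMap.sum_apply, map_smul,
        LinearMap.smul_apply, smul_eq_mul]
      rw [horthG α (nablaG (φ α v) w)]
      rw [Finset.sum_eq_single α]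
      · rw [horthA α α]; simp
      · intro b _ hb; rw [horthA b α]; simp [hb]
      · intro h; exact absurd (Finset.mem_univ α) h
    -- the G-part of the trace
    set MG : ↥G →ₗ[ℝ] ↥G :=
      (nablaG.flip (nablaG v w) - nablaG v ∘ₗ nablaG.flip w + nablaG.flip w ∘ₗ LieAlgebra.ad ℝ ↥G v)
        - ∑ β, (ε β * Btilde (φ β v : L) (w : L)) • φ β
        + ∑ β, ((ε β) • (Btilde.flip (w : L) ∘ₗ ι ∘ₗ φ β)).smulRight (φ β v) with hM
    have hMG : pG ∘ₗ Tmap ∘ₗ ι = MG := by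
      refine LinearMap.ext fun z => Subtype.ext ?_
      have lhs1 : (((pG ∘ₗ Tmap ∘ₗ ι) z : ↥G) : L) = p (Tmap (z : L)) := rfl
      rw [lhs1, hTapp]
      rw [show ⁅(v : L), (z : L)⁆ = ((⁅v, z⁆ : ↥G) : L) from (hGbr v z).symm]
      simp only [hN1, map_sub, map_sum, map_smul, hN2, hN3, hN4, smul_zero,
        Finset.sum_const_zero, sub_zero, map_add, hpv, hpe]
      simp only [hM, LinearMap.add_apply, LinearMap.sub_apply, LinearMap.sum_apply,
        LinearMap.smul_apply, LinearMap.smulRight_apply, LinearMap.flip_apply,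
        LinearMap.coe_comp, Function.comp_apply, LieAlgebra.ad_apply, smul_eq_mul]
      push_cast
      have hιapp : ∀ g : ↥G, ι g = (g : L) := fun g => rfl
      have hflip : ∀ a b : L, Btilde.flip a b = Btilde b a := fun a b => rfl
      simp only [hιapp, hflip]
      abel
    -- trace of MG
    have htrM : LinearMap.trace ℝ ↥G MG
        = ricci nablaG v w
          - ∑ β, (ε β * Btilde (φ β v : L) (w : L)) * LinearMap.trace ℝ ↥G (φ β)
          + ∑ β, ε β * Btilde (φ β (φ β v) : L) (w : L) := by
      rw [hM, map_add, map_sub, map_sum, map_sum]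
      have h1 : LinearMap.trace ℝ ↥G (nablaG.flip (nablaG v w) - nablaG v ∘ₗ nablaG.flip w
          + nablaG.flip w ∘ₗ LieAlgebra.ad ℝ ↥G v) = ricci nablaG v w := rfl
      rw [h1]
      have h2 : ∀ β, LinearMap.trace ℝ ↥G ((ε β * Btilde (φ β v : L) (w : L)) • φ β)
          = (ε β * Btilde (φ β v : L) (w : L)) * LinearMap.trace ℝ ↥G (φ β) := by
        intro β; rw [map_smul, smul_eq_mul]
      have h3 : ∀ β, LinearMap.trace ℝ ↥G
            (((ε β) • (Btilde.flip (w : L) ∘ₗ ι ∘ₗ φ β)).smulRight (φ β v))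
          = ε β * Btilde (φ β (φ β v) : L) (w : L) := by
        intro β
        rw [trace_smulRight_aux]
        simp only [LinearMap.smul_apply, LinearMap.coe_comp, Function.comp_apply, smul_eq_mul]
        rfl
      simp only [h2, h3]
    rw [hricciT, htr Tmap, hMG, htrM]
    simp only [hTe]
    have hcomb : ∀ α, ε α * -((ε α * Btilde (φ α (φ α v) : L) (w : L)) * ε α)
        = -(ε α * Btilde (φ α (φ α v) : L) (w : L)) := by
      intro α; rcases hε α with h | h <;> rw [h] <;> ring
    simp only [hcomb]
    rw [Finset.sum_neg_distrib]
    have hc2 : ∀ β, (ε β * Btilde (φ β v : L) (w : L)) * LinearMap.trace ℝ ↥G (φ β)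
        = (ε β * LinearMap.trace ℝ ↥G (φ β)) * Btilde (φ β v : L) (w : L) := fun β => by ring
    simp only [hc2]
    ring
  -- assemble
  set D : ↥G →ₗ[ℝ] ↥G := ∑ α, (ε α * LinearMap.trace ℝ ↥G (φ α)) • φ α with hD
  constructor
  · apply LinearMap.ext
    intro v
    have key : ∀ w : ↥G, Btilde ((Ricop v : L)) (w : L)
        = Btilde (((lam • (LinearMap.id : ↥G →ₗ[ℝ] ↥G) + D) v : ↥G) : L) (w : L) := by
      intro w
      rw [hRicop]
      have h1 := hric v w
      rw [hEinstein] at h1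
      have h2 : ricci nablaG v w = lam * Btilde (v : L) (w : L)
          + ∑ β, (ε β * LinearMap.trace ℝ ↥G (φ β)) * Btilde (φ β v : L) (w : L) := by
        linarith
      rw [h2]
      have h3 : (((lam • (LinearMap.id : ↥G →ₗ[ℝ] ↥G) + D) v : ↥G) : L)
          = lam • (v : L) + ∑ β, (ε β * LinearMap.trace ℝ ↥G (φ β)) • ((φ β v : L)) := by
        simp [hD, LinearMap.sum_apply, LinearMap.smul_apply]
      rw [h3]
      simp only [map_add, LinearMap.add_apply, map_smul, LinearMap.smul_apply, map_sum,
        LinearMap.sum_apply, smul_eq_mul]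
    have heq : ((Ricop v : L)) = (((lam • (LinearMap.id : ↥G →ₗ[ℝ] ↥G) + D) v : ↥G) : L) := by
      have hzero : ∀ w ∈ G, Btilde ((Ricop v : L) - (((lam • (LinearMap.id : ↥G →ₗ[ℝ] ↥G) + D) v : ↥G) : L)) w = 0 := by
        intro w hw
        rw [map_sub, LinearMap.sub_apply]
        exact sub_eq_zero.mpr (key ⟨w, hw⟩)
      have hmem : ((Ricop v : L)) - (((lam • (LinearMap.id : ↥G →ₗ[ℝ] ↥G) + D) v : ↥G) : L) ∈ G :=
        sub_mem (Ricop v).2 ((lam • (LinearMap.id : ↥G →ₗ[ℝ] ↥G) + D) v).2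
      exact sub_eq_zero.mp (hGnondeg _ hmem hzero)
    exact Subtype.coe_injective heq
  · have hder : ∀ α (a b : ↥G), φ α ⁅a, b⁆ = ⁅φ α a, b⁆ + ⁅a, φ α b⁆ := by
      intro α a b
      rw [← SetLike.coe_eq_coe]
      have h1 : (φ α ⁅a, b⁆ : L) = -⁅e α, ⁅(a : L), (b : L)⁆⁆ := by
        rw [hφ, hGbr]
      have h2 : ((⁅φ α a, b⁆ + ⁅a, φ α b⁆ : ↥G) : L)
          = ⁅((φ α a : L)), (b : L)⁆ + ⁅(a : L), ((φ α b : L))⁆ := rfl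
      rw [h1, h2, hφ, hφ, neg_lie, lie_neg, ← neg_add, leibniz_lie]
    have lie_sum' : ∀ (x : ↥G) (f : Fin k → ↥G), ⁅x, ∑ i, f i⁆ = ∑ i, ⁅x, f i⁆ := by
      intro x f
      rw [← LieAlgebra.ad_apply (R := ℝ), map_sum]
      simp [LieAlgebra.ad_apply]
    have sum_lie' : ∀ (f : Fin k → ↥G) (y : ↥G), ⁅∑ i, f i, y⁆ = ∑ i, ⁅f i, y⁆ := by
      intro f y
      rw [← lie_skew, lie_sum']
      simp [← lie_skew y]
    intro a b
    simp only [hD, LinearMap.sum_apply, LinearMap.smul_apply, hder, smul_add,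
      Finset.sum_add_distrib, sum_lie', lie_sum', smul_lie, lie_smul]
end

section
/- Let 𝔤 be a finite-dimensional abelian real Lie algebra with a nondegenerate symmetric bilinear form g, let 𝔞 be abelian with orthonormal basis {e_α}, ε_α = ±1, and let 𝔤̃ = 𝔤 ⋊ 𝔞 with orthogonal metric g̃ = g ⊕ Σ_α ε_α e^α ⊗ e^α be pseudo-Iwasawa, i.e. each φ_α := −ad(e_α)|_𝔤 is g-symmetric. Define the Ricci form r̃ic of (𝔤̃, g̃) via the Koszul product ∇̃, its curvature R̃(x,y) = ∇̃_x∇̃_y − ∇̃_y∇̃_x − ∇̃_{[x,y]}, and r̃ic(x,y) = tr(z ↦ R̃(z,x)y). Then for all v, w ∈ 𝔤 and all α, β: r̃ic(v,w) = −Σ_γ ε_γ Tr(φ_γ)·g(φ_γ(v), w), r̃ic(v, e_α) = 0, and r̃ic(e_α, e_β) = −Tr(φ_α ∘ φ_β). -/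
set_option maxHeartbeats 1000000 in
/-- Ricci curvature of an abelian pseudo-Iwasawa standard decomposition `𝔤̃ = 𝔤 ⋊ 𝔞`:
`r̃ic(v,w) = −Σ_γ ε_γ Tr(φ_γ) g(φ_γ v, w)`, `r̃ic(v, e_α) = 0`,
`r̃ic(e_α, e_β) = −Tr(φ_α ∘ φ_β)`. -/
theorem stmt_11 (L : Type*) [LieRing L] [LieAlgebra ℝ L] [FiniteDimensional ℝ L]
    (Btilde : LinearMap.BilinForm ℝ L) (hBsymm : ∀ x y : L, Btilde x y = Btilde y x)
    (hBnondeg : Btilde.Nondegenerate)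
    (G : LieIdeal ℝ L)
    -- the nilpotent ideal `𝔤` is abelian
    (hGabelian : ∀ v ∈ G, ∀ w ∈ G, ⁅v, w⁆ = 0)
    (hGnondeg : ∀ v ∈ G, (∀ w ∈ G, Btilde v w = 0) → v = 0)
    (k : ℕ) (e : Fin k → L) (ε : Fin k → ℝ) (hε : ∀ α, ε α = 1 ∨ ε α = -1)
    (hind : LinearIndependent ℝ e)
    (hsup : G.toSubmodule ⊔ Submodule.span ℝ (Set.range e) = ⊤)
    (hinf : G.toSubmodule ⊓ Submodule.span ℝ (Set.range e) = ⊥)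
    (hAabelian : ∀ α β, ⁅e α, e β⁆ = 0)
    (horth : ∀ v ∈ G, ∀ α, Btilde v (e α) = 0)
    (horthA : ∀ α β, Btilde (e α) (e β) = if α = β then ε α else 0)
    (φ : Fin k → (↥G →ₗ[ℝ] ↥G)) (hφ : ∀ α (v : ↥G), ((φ α v : L)) = -⁅e α, (v : L)⁆)
    -- pseudo-Iwasawa condition: each `φ_α` is `g`-symmetric
    (hIwasawa : ∀ α (v w : ↥G), Btilde (φ α v : L) (w : L) = Btilde (v : L) (φ α w : L))
    (nabla : L →ₗ[ℝ] L →ₗ[ℝ] L)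
    (hKoszul : ∀ x y z : L,
      2 * Btilde (nabla x y) z = Btilde ⁅x, y⁆ z - Btilde ⁅y, z⁆ x + Btilde ⁅z, x⁆ y) :
    (∀ v w : ↥G,
      ricci nabla (v : L) (w : L)
        = -∑ γ, ε γ * LinearMap.trace ℝ ↥G (φ γ) * Btilde (φ γ v : L) (w : L)) ∧
    (∀ (v : ↥G) (α : Fin k), ricci nabla (v : L) (e α) = 0) ∧
    (∀ α β : Fin k,
      ricci nabla (e α) (e β) = -LinearMap.trace ℝ ↥G (φ α ∘ₗ φ β)) := by
  classical
  have hε2 : ∀ α, ε α * ε α = 1 := by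
    intro α; rcases hε α with h | h <;> rw [h] <;> norm_num
  -- extensionality from nondegeneracy
  have hext : ∀ a c : L, (∀ u : ↥G, Btilde a (u : L) = Btilde c (u : L)) →
      (∀ β, Btilde a (e β) = Btilde c (e β)) → a = c := by
    intro a c h1 h2
    have key : ∀ z, Btilde (a - c) z = 0 := by
      intro z
      have hle : G.toSubmodule ⊔ Submodule.span ℝ (Set.range e) ≤
          LinearMap.ker (Btilde (a - c)) := by
        apply sup_le
        · intro u hu
          have := h1 ⟨u, hu⟩
          simp only [LinearMap.mem_ker, map_sub, LinearMap.sub_apply]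
          simpa [sub_eq_zero] using this
        · rw [Submodule.span_le]
          rintro _ ⟨β, rfl⟩
          have := h2 β
          simp only [SetLike.mem_coe, LinearMap.mem_ker, map_sub, LinearMap.sub_apply]
          simpa [sub_eq_zero] using this
      rw [hsup] at hle
      exact hle Submodule.mem_top
    have := hBnondeg.1 (a - c) key
    exact sub_eq_zero.mp this
  -- brackets
  have hbr1 : ∀ α (v : ↥G), ⁅e α, (v : L)⁆ = -(φ α v : L) := by
    intro α v; rw [hφ, neg_neg]
  have hbr2 : ∀ α (v : ↥G), ⁅(v : L), e α⁆ = (φ α v : L) := by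
    intro α v; rw [← lie_skew, hbr1, neg_neg]
  have hbrG : ∀ v w : ↥G, ⁅(v : L), (w : L)⁆ = 0 := fun v w => hGabelian _ v.2 _ w.2
  have horth' : ∀ (v : ↥G) α, Btilde (v : L) (e α) = 0 := fun v α => horth _ v.2 α
  have horth'' : ∀ (v : ↥G) α, Btilde (e α) (v : L) = 0 := by
    intro v α; rw [hBsymm]; exact horth' v α
  -- N3 : nabla (e α) = 0
  have hN3G : ∀ α (u : ↥G), nabla (e α) (u : L) = 0 := by
    intro α u
    apply hext _ 0
    · intro u'
      have h := hKoszul (e α) u u'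
      rw [hbr1, hbrG, hbr2] at h
      have hs : Btilde ((φ α u' : L)) (u : L) = Btilde ((φ α u : L)) (u' : L) := by
        rw [hIwasawa, hBsymm]
      simp only [map_neg, LinearMap.neg_apply, map_zero, LinearMap.zero_apply, hs] at h ⊢
      linarith
    · intro β
      have h := hKoszul (e α) u (e β)
      rw [hbr1, hbr2, hAabelian] at h
      simp only [map_neg, LinearMap.neg_apply, map_zero, LinearMap.zero_apply,
        horth' , horth''] at h ⊢
      linarith
  have hN3 : ∀ α (x : L), nabla (e α) x = 0 := by
    intro α x
    have hA : ∀ β, nabla (e α) (e β) = 0 := by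
      intro β
      apply hext _ 0
      · intro u'
        have h := hKoszul (e α) (e β) u'
        rw [hAabelian, hbr1, hbr2] at h
        simp only [map_neg, LinearMap.neg_apply, map_zero, LinearMap.zero_apply,
          horth', horth''] at h ⊢
        linarith
      · intro γ
        have h := hKoszul (e α) (e β) (e γ)
        rw [hAabelian, hAabelian, hAabelian] at h
        simp only [map_zero, LinearMap.zero_apply] at h ⊢
        linarith
    have hle : G.toSubmodule ⊔ Submodule.span ℝ (Set.range e) ≤
        LinearMap.ker (nabla (e α)) := by
      apply sup_le
      · intro u hu
        exact LinearMap.mem_ker.mpr (hN3G α ⟨u, hu⟩)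
      · rw [Submodule.span_le]
        rintro _ ⟨β, rfl⟩
        exact LinearMap.mem_ker.mpr (hA β)
    rw [hsup] at hle
    exact LinearMap.mem_ker.mp (hle Submodule.mem_top)
  -- N2 : nabla v (e α) = φ α v
  have hN2 : ∀ (v : ↥G) α, nabla (v : L) (e α) = (φ α v : L) := by
    intro v α
    apply hext
    · intro w
      have h := hKoszul (v : L) (e α) w
      rw [hbr2, hbr1, hbrG] at h
      have hs : Btilde ((φ α w : L)) (v : L) = Btilde ((φ α v : L)) (w : L) := by
        rw [hIwasawa, hBsymm]
      simp only [map_neg, LinearMap.neg_apply, map_zero, LinearMap.zero_apply, hs] at h ⊢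
      linarith
    · intro β
      have h := hKoszul (v : L) (e α) (e β)
      rw [hbr2, hAabelian, hbr1] at h
      simp only [map_neg, LinearMap.neg_apply, map_zero, LinearMap.zero_apply,
        horth', horth''] at h ⊢
      linarith
  -- N1
  have hN1 : ∀ v w : ↥G, nabla (v : L) (w : L)
      = ∑ γ, (-(ε γ * Btilde ((φ γ v : L)) ((w : L)))) • e γ := by
    intro v w
    apply hext
    · intro u'
      have h := hKoszul (v : L) (w : L) u'
      rw [hbrG, hbrG, hbrG] at h
      simp only [map_zero, LinearMap.zero_apply] at h
      have hr : Btilde (∑ γ, (-(ε γ * Btilde ((φ γ v : L)) ((w : L)))) • e γ) (u' : L) = 0 := by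
        rw [map_sum]
        simp only [LinearMap.sum_apply, map_smul, LinearMap.smul_apply, smul_eq_mul, horth'']
        simp
      rw [hr]; linarith
    · intro β
      have h := hKoszul (v : L) (w : L) (e β)
      rw [hbrG, hbr2, hbr1] at h
      have hs : Btilde ((φ β w : L)) (v : L) = Btilde ((φ β v : L)) (w : L) := by
        rw [hIwasawa, hBsymm]
      simp only [map_neg, LinearMap.neg_apply, map_zero, LinearMap.zero_apply, hs] at h
      have hr : Btilde (∑ γ, (-(ε γ * Btilde ((φ γ v : L)) ((w : L)))) • e γ) (e β)
          = -Btilde ((φ β v : L)) ((w : L)) := by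
        rw [map_sum]
        simp only [LinearMap.sum_apply, map_smul, LinearMap.smul_apply, smul_eq_mul, horthA]
        rw [Finset.sum_eq_single β]
        · rw [if_pos rfl]
          linear_combination (-(Btilde ((φ β v : L)) ((w : L)))) * hε2 β
        · intro γ _ hne
          simp [hne]
        · simp
      rw [hr]; linarith
  -- basis
  let ι := Fin (Module.finrank ℝ ↥G)
  let bG : Module.Basis ι ℝ ↥G := Module.finBasis ℝ ↥G
  have hliG : LinearIndependent ℝ (fun i => (bG i : L)) :=
    bG.linearIndependent.map' (G : Submodule ℝ L).subtype (Submodule.ker_subtype _)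
  have hspanG : Submodule.span ℝ (Set.range (fun i => (bG i : L))) = G.toSubmodule := by
    have h1 : Set.range (fun i => (bG i : L))
        = (G : Submodule ℝ L).subtype '' (Set.range bG) := by
      ext x; simp; exact Iff.rfl
    rw [h1, ← Submodule.map_span]
    erw [bG.span_eq, Submodule.map_top, Submodule.range_subtype]
    rfl
  have hli : LinearIndependent ℝ (Sum.elim (fun i => (bG i : L)) e) := by
    apply hliG.sum_type hind
    rw [hspanG]
    exact disjoint_iff.mpr hinf
  have hspan : ⊤ ≤ Submodule.span ℝ (Set.range (Sum.elim (fun i => (bG i : L)) e)) := by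
    rw [Set.Sum.elim_range, Submodule.span_union, hspanG, hsup]
  let b : Module.Basis (ι ⊕ Fin k) ℝ L := Module.Basis.mk hli hspan
  have hb_inl : ∀ i, b (Sum.inl i) = (bG i : L) := fun i => Module.Basis.mk_apply hli hspan (Sum.inl i)
  have hb_inr : ∀ β, b (Sum.inr β) = e β := fun β => Module.Basis.mk_apply hli hspan (Sum.inr β)
  have hcoe : ∀ u : ↥G, (u : L) = ∑ i, bG.repr u i • (bG i : L) := by
    intro u
    conv_lhs => rw [← bG.sum_repr u]
    push_cast
    rfl
  have hrepr_e : ∀ β j, b.repr (e β) j = if j = Sum.inr β then 1 else 0 := by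
    intro β j
    rw [← hb_inr, b.repr_self]
    simp [Finsupp.single_apply, eq_comm]
  have hreprG_inr : ∀ (u : ↥G) β, b.repr (u : L) (Sum.inr β) = 0 := by
    intro u β
    rw [hcoe u]
    have : ∀ i : ι, (bG i : L) = b (Sum.inl i) := fun i => (hb_inl i).symm
    simp only [this, map_sum, map_smul, b.repr_self]
    simp [Finsupp.single_apply]
  have hreprG_inl : ∀ (u : ↥G) i, b.repr (u : L) (Sum.inl i) = bG.repr u i := by
    intro u i
    rw [hcoe u]
    have : ∀ i : ι, (bG i : L) = b (Sum.inl i) := fun i => (hb_inl i).symm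
    simp only [this, map_sum, map_smul, b.repr_self]
    simp [Finsupp.single_apply]
    rw [Finset.sum_eq_single i]
    · simp
    · intro j _ h; simp [h]
    · simp
  have htrace : ∀ M : L →ₗ[ℝ] L, LinearMap.trace ℝ L M =
      (∑ i, b.repr (M (bG i : L)) (Sum.inl i)) + ∑ β, b.repr (M (e β)) (Sum.inr β) := by
    intro M
    rw [LinearMap.trace_eq_matrix_trace ℝ b, Matrix.trace, Fintype.sum_sum_type]
    congr 1
    · exact Finset.sum_congr rfl fun j _ => by
        simp [Matrix.diag, LinearMap.toMatrix_apply, hb_inl]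
    · exact Finset.sum_congr rfl fun j _ => by
        simp [Matrix.diag, LinearMap.toMatrix_apply, hb_inr]
  have htraceG : ∀ g : ↥G →ₗ[ℝ] ↥G,
      LinearMap.trace ℝ ↥G g = ∑ i, bG.repr (g (bG i)) i := by
    intro g
    rw [LinearMap.trace_eq_matrix_trace ℝ bG, Matrix.trace]
    exact Finset.sum_congr rfl fun j _ => by
      simp [Matrix.diag, LinearMap.toMatrix_apply]
  -- the Ricci operator applied pointwise
  have hMap : ∀ x y z : L,
      (nabla.flip (nabla x y) - nabla x ∘ₗ nabla.flip y + nabla.flip y ∘ₗ LieAlgebra.ad ℝ L x) z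
      = nabla z (nabla x y) - nabla x (nabla z y) + nabla ⁅x, z⁆ y := by
    intro x y z
    simp [LinearMap.sub_apply, LinearMap.add_apply, LinearMap.comp_apply,
      LinearMap.flip_apply, LieAlgebra.ad_apply]
  refine ⟨?_, ?_, ?_⟩
  · -- case 1
    intro v w
    show LinearMap.trace ℝ L _ = _
    rw [htrace]
    have hGpart : ∀ i : ι, b.repr
        ((nabla.flip (nabla (v : L) (w : L)) - nabla (v : L) ∘ₗ nabla.flip (w : L)
          + nabla.flip (w : L) ∘ₗ LieAlgebra.ad ℝ L (v : L)) (bG i : L)) (Sum.inl i)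
        = ∑ γ, ((-(ε γ * Btilde ((φ γ v : L)) ((w : L)))) * bG.repr (φ γ (bG i)) i
            - (-(ε γ * Btilde ((φ γ (bG i) : L)) ((w : L)))) * bG.repr (φ γ v) i) := by
      intro i
      rw [hMap, hbrG v (bG i), map_zero, LinearMap.zero_apply, add_zero]
      rw [hN1 v w, hN1 (bG i) w]
      rw [map_sum, map_sum]
      have h1 : ∀ γ, nabla ((bG i : L)) ((-(ε γ * Btilde ((φ γ v : L)) ((w : L)))) • e γ)
          = (-(ε γ * Btilde ((φ γ v : L)) ((w : L)))) • (φ γ (bG i) : L) := by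
        intro γ; rw [map_smul, hN2]
      have h2 : ∀ γ, nabla ((v : L)) ((-(ε γ * Btilde ((φ γ (bG i) : L)) ((w : L)))) • e γ)
          = (-(ε γ * Btilde ((φ γ (bG i) : L)) ((w : L)))) • (φ γ v : L) := by
        intro γ; rw [map_smul, hN2]
      simp only [h1, h2]
      rw [map_sub, map_sum, map_sum, Finsupp.sub_apply, Finsupp.coe_finset_sum,
        Finset.sum_apply, Finsupp.coe_finset_sum, Finset.sum_apply, ← Finset.sum_sub_distrib]
      refine Finset.sum_congr rfl fun γ _ => ?_
      rw [map_smul, map_smul, Finsupp.smul_apply, Finsupp.smul_apply, hreprG_inl, hreprG_inl]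
      simp [smul_eq_mul]
    have hApart : ∀ β, b.repr
        ((nabla.flip (nabla (v : L) (w : L)) - nabla (v : L) ∘ₗ nabla.flip (w : L)
          + nabla.flip (w : L) ∘ₗ LieAlgebra.ad ℝ L (v : L)) (e β)) (Sum.inr β)
        = -(ε β * Btilde ((φ β (φ β v) : L)) ((w : L))) := by
      intro β
      rw [hMap, hbr2 β v, hN3 β (w : L), map_zero, sub_zero]
      have : nabla (e β) (nabla (v:L) (w:L)) = 0 := hN3 β _
      rw [this, zero_add, hN1 (φ β v) w, map_sum, Finsupp.coe_finset_sum, Finset.sum_apply]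
      rw [Finset.sum_eq_single β]
      · rw [map_smul, Finsupp.smul_apply, hrepr_e]
        simp
      · intro γ _ hne
        rw [map_smul, Finsupp.smul_apply, hrepr_e]
        simp [hne, Ne.symm hne]
      · simp
    rw [Finset.sum_congr rfl fun i _ => hGpart i, Finset.sum_congr rfl fun β _ => hApart β]
    rw [Finset.sum_comm]
    have key2 : ∀ γ, ∑ i : ι, (-(ε γ * Btilde ((φ γ (bG i) : L)) ((w : L)))) * bG.repr (φ γ v) i
        = -(ε γ * Btilde ((φ γ v : L)) ((φ γ w : L))) := by
      intro γ
      have e1 : ∀ i : ι, (-(ε γ * Btilde ((φ γ (bG i) : L)) ((w : L)))) * bG.repr (φ γ v) i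
          = (-ε γ) * (bG.repr (φ γ v) i * Btilde ((bG i : L)) ((φ γ w : L))) := by
        intro i; rw [hIwasawa]; ring
      rw [Finset.sum_congr rfl fun i _ => e1 i, ← Finset.mul_sum]
      have e2 : ∑ i : ι, bG.repr (φ γ v) i * Btilde ((bG i : L)) ((φ γ w : L))
          = Btilde ((φ γ v : L)) ((φ γ w : L)) := by
        conv_rhs => rw [hcoe (φ γ v)]
        rw [map_sum, LinearMap.sum_apply]
        exact Finset.sum_congr rfl fun i _ => by
          rw [map_smul, LinearMap.smul_apply, smul_eq_mul]
      rw [e2]; ring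
    have hsum1 : ∀ γ, ∑ i : ι, ((-(ε γ * Btilde ((φ γ v : L)) ((w : L)))) * bG.repr (φ γ (bG i)) i
        - (-(ε γ * Btilde ((φ γ (bG i) : L)) ((w : L)))) * bG.repr (φ γ v) i)
        = (-(ε γ * Btilde ((φ γ v : L)) ((w : L)))) * LinearMap.trace ℝ ↥G (φ γ)
          + ε γ * Btilde ((φ γ v : L)) ((φ γ w : L)) := by
      intro γ
      rw [Finset.sum_sub_distrib, ← Finset.mul_sum, ← htraceG, key2]
      ring
    rw [Finset.sum_congr rfl fun γ _ => hsum1 γ]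
    have hA2 : ∀ β, -(ε β * Btilde ((φ β (φ β v) : L)) ((w : L)))
        = -(ε β * Btilde ((φ β v : L)) ((φ β w : L))) := by
      intro β; rw [hIwasawa]
    rw [Finset.sum_congr rfl fun β _ => hA2 β]
    rw [Finset.sum_add_distrib]
    have hcancel : ∑ γ, ε γ * Btilde ((φ γ v : L)) ((φ γ w : L))
        + ∑ β, -(ε β * Btilde ((φ β v : L)) ((φ β w : L))) = 0 := by
      rw [← Finset.sum_add_distrib]; simp
    have hmain : ∑ γ, (-(ε γ * Btilde ((φ γ v : L)) ((w : L)))) * LinearMap.trace ℝ ↥G (φ γ)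
        = -∑ γ, ε γ * LinearMap.trace ℝ ↥G (φ γ) * Btilde ((φ γ v : L)) ((w : L)) := by
      rw [← Finset.sum_neg_distrib]
      exact Finset.sum_congr rfl fun γ _ => by ring
    rw [add_assoc, hcancel, add_zero, hmain]
  · -- case 2
    intro v α
    show LinearMap.trace ℝ L _ = _
    rw [htrace]
    have hGpart : ∀ i : ι, b.repr
        ((nabla.flip (nabla (v : L) (e α)) - nabla (v : L) ∘ₗ nabla.flip (e α)
          + nabla.flip (e α) ∘ₗ LieAlgebra.ad ℝ L (v : L)) (bG i : L)) (Sum.inl i) = 0 := by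
      intro i
      rw [hMap, hbrG v (bG i), map_zero, LinearMap.zero_apply, add_zero]
      rw [hN2 v α, hN2 (bG i) α, hN1 (bG i) (φ α v), hN1 v (φ α (bG i))]
      rw [map_sub, Finsupp.sub_apply]
      simp [map_sum, map_smul, hrepr_e]
    have hApart : ∀ γ, b.repr
        ((nabla.flip (nabla (v : L) (e α)) - nabla (v : L) ∘ₗ nabla.flip (e α)
          + nabla.flip (e α) ∘ₗ LieAlgebra.ad ℝ L (v : L)) (e γ)) (Sum.inr γ) = 0 := by
      intro γ
      rw [hMap, hN3 γ, hN3 γ, map_zero, hbr2 γ v, hN2 (φ γ v) α]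
      simp [hreprG_inr]
    rw [Finset.sum_congr rfl fun i _ => hGpart i, Finset.sum_congr rfl fun γ _ => hApart γ]
    simp
  · -- case 3
    intro α β
    show LinearMap.trace ℝ L _ = _
    rw [htrace]
    have hGpart : ∀ i : ι, b.repr
        ((nabla.flip (nabla (e α) (e β)) - nabla (e α) ∘ₗ nabla.flip (e β)
          + nabla.flip (e β) ∘ₗ LieAlgebra.ad ℝ L (e α)) (bG i : L)) (Sum.inl i)
        = -(bG.repr ((φ β ∘ₗ φ α) (bG i)) i) := by
      intro i
      rw [hMap, hN3 α (e β), map_zero, hN3 α, sub_zero, hbr1 α (bG i)]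
      rw [map_neg, LinearMap.neg_apply, hN2 (φ α (bG i)) β]
      rw [zero_add, map_neg, Finsupp.neg_apply, hreprG_inl]
      rfl
    have hApart : ∀ γ, b.repr
        ((nabla.flip (nabla (e α) (e β)) - nabla (e α) ∘ₗ nabla.flip (e β)
          + nabla.flip (e β) ∘ₗ LieAlgebra.ad ℝ L (e α)) (e γ)) (Sum.inr γ) = 0 := by
      intro γ
      rw [hMap, hN3 γ, hN3 α, hAabelian α γ, map_zero, LinearMap.zero_apply]
      simp
    rw [Finset.sum_congr rfl fun i _ => hGpart i, Finset.sum_congr rfl fun γ _ => hApart γ]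
    rw [Finset.sum_const_zero, add_zero, Finset.sum_neg_distrib, ← htraceG,
      LinearMap.trace_comp_comm']
end

section
/- Let 𝔤 be an abelian real Lie algebra of dimension n with a nondegenerate symmetric bilinear form g, let 𝔞 be abelian of dimension k with orthonormal basis {e_α}, ε_α = ±1, and let 𝔤̃ = 𝔤 ⋊ 𝔞 with orthogonal metric g̃ = g ⊕ Σ_α ε_α e^α ⊗ e^α be pseudo-Iwasawa, with φ_α := −ad(e_α)|_𝔤 g-symmetric. Define the scalar curvature s of (𝔤̃, g̃) as the g̃-trace of its Ricci form r̃ic, i.e. s = Σ_i ε̃_i r̃ic(f_i, f_i) for any orthonormal basis {f_i} of 𝔤̃ with ε̃_i = g̃(f_i,f_i). Then s = −Σ_α ε_α ( (Tr φ_α)² + Tr(φ_α ∘ φ_α) ). -/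
set_option maxHeartbeats 1000000


noncomputable def ricciBil {L : Type*} [LieRing L] [LieAlgebra ℝ L]
    (nabla : L →ₗ[ℝ] L →ₗ[ℝ] L) : L →ₗ[ℝ] L →ₗ[ℝ] ℝ :=
  LinearMap.mk₂ ℝ (fun x y => ricci nabla x y)
    (fun x x' y => by
      unfold ricci
      rw [← map_add]
      refine congrArg (LinearMap.trace ℝ L) ?_
      ext z
      simp only [LinearMap.add_apply, LinearMap.sub_apply, LinearMap.comp_apply,
        LinearMap.flip_apply, LieAlgebra.ad_apply, map_add, add_lie]
      abel)
    (fun c x y => by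
      unfold ricci
      rw [← map_smul]
      refine congrArg (LinearMap.trace ℝ L) ?_
      ext z
      simp only [LinearMap.smul_apply, LinearMap.sub_apply, LinearMap.add_apply,
        LinearMap.comp_apply, LinearMap.flip_apply, LieAlgebra.ad_apply, map_smul, smul_lie,
        smul_sub, smul_add]
      )
    (fun x y y' => by
      unfold ricci
      rw [← map_add]
      refine congrArg (LinearMap.trace ℝ L) ?_
      ext z
      simp only [LinearMap.add_apply, LinearMap.sub_apply, LinearMap.comp_apply,
        LinearMap.flip_apply, LieAlgebra.ad_apply, map_add]
      abel)
    (fun c x y => by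
      unfold ricci
      rw [← map_smul]
      refine congrArg (LinearMap.trace ℝ L) ?_
      ext z
      simp only [LinearMap.smul_apply, LinearMap.sub_apply, LinearMap.add_apply,
        LinearMap.comp_apply, LinearMap.flip_apply, LieAlgebra.ad_apply, map_smul,
        smul_sub, smul_add]
      )

/-- Scalar curvature of an abelian pseudo-Iwasawa standard decomposition `𝔤̃ = 𝔤 ⋊ 𝔞`:
`s = −Σ_α ε_α ((Tr φ_α)² + Tr(φ_α ∘ φ_α))`, where `s` is the `g̃`-trace of the Ricci
form, computed in any orthonormal basis `{f_i}` of `𝔤̃` with `g̃(f_i,f_i) = δ_i = ±1`. -/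
theorem stmt_12 (L : Type*) [LieRing L] [LieAlgebra ℝ L] [FiniteDimensional ℝ L]
    (Btilde : LinearMap.BilinForm ℝ L) (hBsymm : ∀ x y : L, Btilde x y = Btilde y x)
    (hBnondeg : Btilde.Nondegenerate)
    (G : LieIdeal ℝ L)
    -- the ideal `𝔤` is abelian, of dimension `n`
    (hGabelian : ∀ v ∈ G, ∀ w ∈ G, ⁅v, w⁆ = 0)
    (n : ℕ) (hn : Module.finrank ℝ ↥G = n)
    (hGnondeg : ∀ v ∈ G, (∀ w ∈ G, Btilde v w = 0) → v = 0)
    (k : ℕ) (e : Fin k → L) (ε : Fin k → ℝ) (hε : ∀ α, ε α = 1 ∨ ε α = -1)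
    (hind : LinearIndependent ℝ e)
    (hsup : G.toSubmodule ⊔ Submodule.span ℝ (Set.range e) = ⊤)
    (hinf : G.toSubmodule ⊓ Submodule.span ℝ (Set.range e) = ⊥)
    (hAabelian : ∀ α β, ⁅e α, e β⁆ = 0)
    (horth : ∀ v ∈ G, ∀ α, Btilde v (e α) = 0)
    (horthA : ∀ α β, Btilde (e α) (e β) = if α = β then ε α else 0)
    (φ : Fin k → (↥G →ₗ[ℝ] ↥G)) (hφ : ∀ α (v : ↥G), ((φ α v : L)) = -⁅e α, (v : L)⁆)
    -- pseudo-Iwasawa condition: each `φ_α` is `g`-symmetric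
    (hIwasawa : ∀ α (v w : ↥G), Btilde (φ α v : L) (w : L) = Btilde (v : L) (φ α w : L))
    (nabla : L →ₗ[ℝ] L →ₗ[ℝ] L)
    (hKoszul : ∀ x y z : L,
      2 * Btilde (nabla x y) z = Btilde ⁅x, y⁆ z - Btilde ⁅y, z⁆ x + Btilde ⁅z, x⁆ y)
    -- an orthonormal basis of `𝔤̃`
    (m : ℕ) (f : Module.Basis (Fin m) ℝ L) (δ : Fin m → ℝ) (hδ : ∀ i, δ i = 1 ∨ δ i = -1)
    (horthf : ∀ i j, Btilde (f i) (f j) = if i = j then δ i else 0) :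
    ∑ i, δ i * ricci nabla (f i) (f i)
      = -∑ α, ε α * ((LinearMap.trace ℝ ↥G (φ α)) ^ 2
          + LinearMap.trace ℝ ↥G (φ α ∘ₗ φ α)) := by
  have hbr1 : ∀ v w : ↥G, ⁅(v : L), (w : L)⁆ = 0 := fun v w => hGabelian v v.2 w w.2
  have hbr2 : ∀ α (v : ↥G), ⁅e α, (v : L)⁆ = -(φ α v : L) := fun α v => by
    rw [hφ α v, neg_neg]
  have hbr3 : ∀ α (v : ↥G), ⁅(v : L), e α⁆ = (φ α v : L) := fun α v => by
    rw [← lie_skew, hbr2, neg_neg]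
  have hBGe : ∀ (v : ↥G) α, Btilde (v : L) (e α) = 0 := fun v α => horth v v.2 α
  have hBeG : ∀ α (v : ↥G), Btilde (e α) (v : L) = 0 := fun α v => by
    rw [hBsymm]; exact hBGe v α
  have hε2 : ∀ α, ε α * ε α = 1 := fun α => by rcases hε α with h | h <;> rw [h] <;> norm_num
  -- uniqueness test
  have htest : ∀ X : L, (∀ w : ↥G, Btilde X (w : L) = 0) → (∀ β, Btilde X (e β) = 0) →
      X = 0 := by
    intro X h1 h2
    apply hBnondeg.1
    intro y
    have hy : y ∈ G.toSubmodule ⊔ Submodule.span ℝ (Set.range e) := by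
      rw [hsup]; exact Submodule.mem_top
    obtain ⟨a, ha, b, hb, rfl⟩ := Submodule.mem_sup.mp hy
    have hXa : Btilde X a = 0 := h1 ⟨a, ha⟩
    have hXb : Btilde X b = 0 := by
      refine Submodule.span_induction ?_ ?_ ?_ ?_ hb
      · rintro _ ⟨β, rfl⟩; exact h2 β
      · simp
      · intro x y _ _ hx hy; rw [map_add, hx, hy, add_zero]
      · intro c x _ hx; rw [map_smul, hx, smul_zero]
    rw [map_add, hXa, hXb, add_zero]
  have huniq : ∀ X Y : L, (∀ w : ↥G, Btilde X (w : L) = Btilde Y (w : L)) →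
      (∀ β, Btilde X (e β) = Btilde Y (e β)) → X = Y := by
    intro X Y h1 h2
    have := htest (X - Y) (fun w => by rw [map_sub, LinearMap.sub_apply, h1, sub_self])
      (fun β => by rw [map_sub, LinearMap.sub_apply, h2, sub_self])
    exact sub_eq_zero.mp this
  have h2c : ∀ a b : ℝ, 2 * a = 2 * b → a = b := fun a b h => by linarith
  -- Claim C : ∇_{e α} v = 0
  have hnC : ∀ α (v : ↥G), nabla (e α) (v : L) = 0 := by
    intro α v
    refine huniq _ _ (fun w => h2c _ _ ?_) (fun β => h2c _ _ ?_)
    · rw [hKoszul, hbr2 α v, hbr1 v w, hbr3 α w]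
      simp only [map_neg, map_zero, LinearMap.neg_apply, LinearMap.zero_apply]
      linarith [hIwasawa α w v, hBsymm (↑w : L) ↑(φ α v)]
    · rw [hKoszul, hbr2 α v, hbr3 β v, hAabelian β α]
      simp [map_neg, map_zero, hBGe]
  -- Claim B : ∇_v (e α) = φ α v
  have hnB : ∀ α (v : ↥G), nabla (v : L) (e α) = ↑(φ α v) := by
    intro α v
    refine huniq _ _ (fun w => h2c _ _ ?_) (fun β => h2c _ _ ?_)
    · rw [hKoszul, hbr3 α v, hbr2 α w, hbr1 w v]
      simp only [map_neg, map_zero, LinearMap.neg_apply, LinearMap.zero_apply]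
      linarith [hIwasawa α w v, hBsymm (↑w : L) ↑(φ α v)]
    · rw [hKoszul, hbr3 α v, hAabelian α β, hbr2 β v]
      simp [map_neg, map_zero, hBGe]
  -- Claim D : ∇_{e α} (e β) = 0
  have hnD : ∀ α β, nabla (e α) (e β) = 0 := by
    intro α β
    refine huniq _ _ (fun w => h2c _ _ ?_) (fun γ => h2c _ _ ?_)
    · rw [hKoszul, hAabelian α β, hbr2 β w, hbr3 α w]
      simp [map_neg, map_zero, hBGe, hBeG]
    · rw [hKoszul, hAabelian α β, hAabelian β γ, hAabelian γ α]
      simp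
  -- Claim A : ∇_v w = ∑ α, -(ε α * B(φ α v, w)) • e α
  have hnA : ∀ v w : ↥G, nabla (v : L) (w : L)
      = ∑ α, (-(ε α * Btilde ↑(φ α v) ↑w)) • e α := by
    intro v w
    refine huniq _ _ (fun u => h2c _ _ ?_) (fun β => h2c _ _ ?_)
    · rw [hKoszul, hbr1 v w, hbr1 w u, hbr1 u v]
      simp [map_sum, LinearMap.sum_apply, map_smul, LinearMap.smul_apply, hBeG]
    · rw [hKoszul, hbr1 v w, hbr3 β w, hbr2 β v]
      simp only [map_neg, map_zero, LinearMap.neg_apply, LinearMap.zero_apply,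
        map_sum, LinearMap.sum_apply, map_smul, LinearMap.smul_apply, smul_eq_mul,
        horthA, mul_ite, mul_zero, Finset.sum_ite_eq', Finset.mem_univ, if_true]
      have h1 := hIwasawa β w v
      have h2 := hBsymm (↑w : L) ↑(φ β v)
      have h3 := hε2 β
      have h4 : 2 * (-(ε β * Btilde ↑(φ β v) ↑w) * ε β) = -(2 * Btilde ↑(φ β v) ↑w) := by
        linear_combination (-(2 * Btilde ↑(φ β v) ↑w)) * h3
      linarith [h4]
  -- adapted basis of L
  let bG : Module.Basis (Fin (Module.finrank ℝ ↥G)) ℝ ↥G := Module.finBasis ℝ ↥G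
  have hGspan : Submodule.span ℝ (Set.range (fun i => (bG i : L))) = G.toSubmodule := by
    have h1 : (fun i => (bG i : L)) = (G.toSubmodule.subtype) ∘ bG := rfl
    rw [h1, Set.range_comp, Submodule.span_image, bG.span_eq, Submodule.map_subtype_top]
  have hindG : LinearIndependent ℝ (fun i => (bG i : L)) :=
    bG.linearIndependent.map' G.toSubmodule.subtype (Submodule.ker_subtype _)
  have hindL : LinearIndependent ℝ (Sum.elim (fun i => (bG i : L)) e) := by
    refine hindG.sum_type hind ?_
    rw [hGspan]
    exact disjoint_iff.mpr hinf
  have hspanL : Submodule.span ℝ (Set.range (Sum.elim (fun i => (bG i : L)) e)) = ⊤ := by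
    rw [Set.Sum.elim_range, Submodule.span_union, hGspan, hsup]
  let bL : Module.Basis (Fin (Module.finrank ℝ ↥G) ⊕ Fin k) ℝ L :=
    Module.Basis.mk hindL (by rw [hspanL])
  have hbLl : ∀ i, bL (Sum.inl i) = ↑(bG i) := fun i => by simp [bL, Module.Basis.mk_apply]
  have hbLr : ∀ β, bL (Sum.inr β) = e β := fun β => by simp [bL, Module.Basis.mk_apply]
  -- trace formulas
  have htrgen : ∀ (ι' : Type) [Fintype ι'] [DecidableEq ι'] (b : Module.Basis ι' ℝ L)
      (T : L →ₗ[ℝ] L), LinearMap.trace ℝ L T = ∑ s, b.repr (T (b s)) s := by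
    intro ι' _ _ b T
    rw [LinearMap.trace_eq_matrix_trace ℝ b T]
    simp [Matrix.trace, Matrix.diag, LinearMap.toMatrix_apply]
  have htrL : ∀ T : L →ₗ[ℝ] L, LinearMap.trace ℝ L T
      = (∑ i, bL.repr (T ↑(bG i)) (Sum.inl i)) + ∑ β, bL.repr (T (e β)) (Sum.inr β) := by
    intro T
    rw [htrgen _ bL T, Fintype.sum_sum_type]
    congr 1
    · exact Finset.sum_congr rfl fun i _ => by rw [hbLl]
    · exact Finset.sum_congr rfl fun β _ => by rw [hbLr]
  have htrG : ∀ ψ : ↥G →ₗ[ℝ] ↥G,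
      LinearMap.trace ℝ ↥G ψ = ∑ i, bG.repr (ψ (bG i)) i := by
    intro ψ
    rw [LinearMap.trace_eq_matrix_trace ℝ bG ψ]
    simp [Matrix.trace, Matrix.diag, LinearMap.toMatrix_apply]
  -- repr lemmas
  have hreprG : ∀ x : ↥G, ⇑(bL.repr ↑x) = Sum.elim (fun i => bG.repr x i) (fun _ => 0) := by
    intro x
    have hx : (↑x : L) = ∑ s, (Sum.elim (fun i => bG.repr x i) (fun _ : Fin k => (0:ℝ)) s) • bL s := by
      rw [Fintype.sum_sum_type]
      simp only [Sum.elim_inl, Sum.elim_inr, zero_smul, Finset.sum_const_zero, add_zero]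
      have h2 : (∑ i, (bG.repr x i) • bL (Sum.inl i)) = ∑ i, (bG.repr x i) • ((bG i : L)) :=
        Finset.sum_congr rfl fun i _ => by rw [hbLl]
      rw [h2]
      have h3 := congrArg (G.toSubmodule.subtype) (bG.sum_repr x)
      conv_lhs => rw [← bG.sum_repr x]
      rw [AddSubmonoidClass.coe_finset_sum]
      simp
    rw [hx, bL.repr_sum_self]
  have hreprA : ∀ c : Fin k → ℝ, ⇑(bL.repr (∑ β, c β • e β)) = Sum.elim (fun _ => 0) c := by
    intro c
    have hx : (∑ β, c β • e β) = ∑ s, (Sum.elim (fun _ => (0:ℝ)) c s) • bL s := by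
      rw [Fintype.sum_sum_type]
      simp only [Sum.elim_inl, Sum.elim_inr, zero_smul, Finset.sum_const_zero, zero_add]
      exact Finset.sum_congr rfl fun β _ => by rw [hbLr]
    rw [hx, bL.repr_sum_self]
  -- abbreviations
  have hEval : ∀ x y z : L,
      (nabla.flip (nabla x y) - nabla x ∘ₗ nabla.flip y + nabla.flip y ∘ₗ LieAlgebra.ad ℝ L x) z
        = nabla z (nabla x y) - nabla x (nabla z y) + nabla ⁅x, z⁆ y := by
    intro x y z
    simp [LinearMap.sub_apply, LinearMap.add_apply, LinearMap.comp_apply,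
      LinearMap.flip_apply, LieAlgebra.ad_apply]
  have hRl : ∀ (x : ↥G) i, bL.repr (↑x) (Sum.inl i) = bG.repr x i := fun x i => by
    rw [hreprG]; rfl
  have hRr0 : ∀ (x : ↥G) β, bL.repr (↑x) (Sum.inr β) = 0 := fun x β => by
    rw [hreprG]; rfl
  have hAl0 : ∀ (c : Fin k → ℝ) i, bL.repr (∑ β, c β • e β) (Sum.inl i) = 0 := fun c i => by
    rw [hreprA]; rfl
  have hAr : ∀ (c : Fin k → ℝ) β, bL.repr (∑ β', c β' • e β') (Sum.inr β) = c β := fun c β => by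
    rw [hreprA]; rfl
  have hsum_lin : ∀ α (w x : ↥G),
      (∑ i, Btilde ↑(φ α (bG i)) ↑w * bG.repr x i) = Btilde ↑(φ α x) ↑w := by
    intro α w x
    have h0 := congrArg (fun y : ↥G => Btilde ↑(φ α y) ↑w) (bG.sum_repr x)
    rw [← h0, map_sum]
    simp [map_smul, AddSubmonoidClass.coe_finset_sum, LinearMap.sum_apply, map_sum,
      smul_eq_mul, mul_comm]
  -- ric computation 1 : ric(v,w) for v w ∈ G
  have ric1 : ∀ v w : ↥G, ricci nabla (↑v) (↑w)
      = -∑ α, ε α * (LinearMap.trace ℝ ↥G (φ α)) * Btilde ↑(φ α v) ↑w := by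
    intro v w
    have hTl : ∀ u : ↥G,
        (nabla.flip (nabla ↑v ↑w) - nabla ↑v ∘ₗ nabla.flip ↑w
          + nabla.flip ↑w ∘ₗ LieAlgebra.ad ℝ L ↑v) (↑u)
        = ↑((∑ α, (-(ε α * Btilde ↑(φ α v) ↑w)) • φ α u)
            - ∑ α, (-(ε α * Btilde ↑(φ α u) ↑w)) • φ α v) := by
      intro u
      rw [hEval, hbr1 v u, hnA v w, hnA u w]
      have h1 : nabla (↑u) (∑ α, (-(ε α * Btilde ↑(φ α v) ↑w)) • e α)
          = ∑ α, (-(ε α * Btilde ↑(φ α v) ↑w)) • (↑(φ α u) : L) := by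
        rw [map_sum]
        exact Finset.sum_congr rfl fun α _ => by rw [map_smul, hnB]
      have h2 : nabla (↑v) (∑ α, (-(ε α * Btilde ↑(φ α u) ↑w)) • e α)
          = ∑ α, (-(ε α * Btilde ↑(φ α u) ↑w)) • (↑(φ α v) : L) := by
        rw [map_sum]
        exact Finset.sum_congr rfl fun α _ => by rw [map_smul, hnB]
      have h3 : nabla (0 : L) (↑w) = 0 := by
        rw [map_zero, LinearMap.zero_apply]
      rw [h1, h2, h3, add_zero, AddSubgroupClass.coe_sub,
        AddSubmonoidClass.coe_finset_sum, AddSubmonoidClass.coe_finset_sum]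
      simp only [SetLike.val_smul]
    have hTr : ∀ β,
        (nabla.flip (nabla ↑v ↑w) - nabla ↑v ∘ₗ nabla.flip ↑w
          + nabla.flip ↑w ∘ₗ LieAlgebra.ad ℝ L ↑v) (e β)
        = ∑ α, (-(ε α * Btilde ↑(φ α (φ β v)) ↑w)) • e α := by
      intro β
      rw [hEval, hbr3 β v, hnA v w, hnC β w, hnA (φ β v) w]
      have h1 : nabla (e β) (∑ α, (-(ε α * Btilde ↑(φ α v) ↑w)) • e α) = 0 := by
        rw [map_sum]
        have hz : ∀ α : Fin k,
            (nabla (e β)) ((-(ε α * Btilde ↑(φ α v) ↑w)) • e α) = 0 := fun α => by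
          rw [map_smul, hnD β α, smul_zero]
        rw [Finset.sum_congr rfl fun α _ => hz α]
        simp
      have h2 : nabla (↑v) (0 : L) = 0 := map_zero _
      rw [h1, h2, sub_zero, zero_add]
    show LinearMap.trace ℝ L _ = _
    rw [htrL]
    have big1 : (∑ i, bL.repr ((nabla.flip (nabla ↑v ↑w) - nabla ↑v ∘ₗ nabla.flip ↑w
          + nabla.flip ↑w ∘ₗ LieAlgebra.ad ℝ L ↑v) (↑(bG i))) (Sum.inl i))
        = (∑ α, (-(ε α * Btilde ↑(φ α v) ↑w)) * (LinearMap.trace ℝ ↥G (φ α)))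
          + ∑ α, ε α * Btilde ↑(φ α (φ α v)) ↑w := by
      have step1 : (∑ i, bL.repr ((nabla.flip (nabla ↑v ↑w) - nabla ↑v ∘ₗ nabla.flip ↑w
            + nabla.flip ↑w ∘ₗ LieAlgebra.ad ℝ L ↑v) (↑(bG i))) (Sum.inl i))
          = ∑ i, bG.repr ((∑ α, (-(ε α * Btilde ↑(φ α v) ↑w)) • φ α (bG i))
              - ∑ α, (-(ε α * Btilde ↑(φ α (bG i)) ↑w)) • φ α v) i :=
        Finset.sum_congr rfl fun i _ => by rw [hTl (bG i), hRl]
      rw [step1]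
      have expand : ∀ i : Fin (Module.finrank ℝ ↥G),
          bG.repr ((∑ α, (-(ε α * Btilde ↑(φ α v) ↑w)) • φ α (bG i))
            - ∑ α, (-(ε α * Btilde ↑(φ α (bG i)) ↑w)) • φ α v) i
          = (∑ α, (-(ε α * Btilde ↑(φ α v) ↑w)) * bG.repr (φ α (bG i)) i)
            - ∑ α, (-(ε α * Btilde ↑(φ α (bG i)) ↑w)) * bG.repr (φ α v) i := by
        intro i
        rw [map_sub, Finsupp.sub_apply, map_sum, map_sum, Finsupp.finset_sum_apply,
          Finsupp.finset_sum_apply]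
        congr 1 <;>
          exact Finset.sum_congr rfl fun α _ => by rw [map_smul, Finsupp.smul_apply, smul_eq_mul]
      rw [show (∑ i, bG.repr ((∑ α, (-(ε α * Btilde ↑(φ α v) ↑w)) • φ α (bG i))
              - ∑ α, (-(ε α * Btilde ↑(φ α (bG i)) ↑w)) • φ α v) i)
          = ∑ i, ((∑ α, (-(ε α * Btilde ↑(φ α v) ↑w)) * bG.repr (φ α (bG i)) i)
            - ∑ α, (-(ε α * Btilde ↑(φ α (bG i)) ↑w)) * bG.repr (φ α v) i)
        from Finset.sum_congr rfl fun i _ => expand i, Finset.sum_sub_distrib]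
      have hA : (∑ i, ∑ α, (-(ε α * Btilde ↑(φ α v) ↑w)) * bG.repr (φ α (bG i)) i)
          = ∑ α, (-(ε α * Btilde ↑(φ α v) ↑w)) * (LinearMap.trace ℝ ↥G (φ α)) := by
        rw [Finset.sum_comm]
        exact Finset.sum_congr rfl fun α _ => by rw [← Finset.mul_sum, htrG (φ α)]
      have hB : (∑ i, ∑ α, (-(ε α * Btilde ↑(φ α (bG i)) ↑w)) * bG.repr (φ α v) i)
          = ∑ α, -(ε α * Btilde ↑(φ α (φ α v)) ↑w) := by
        rw [Finset.sum_comm]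
        refine Finset.sum_congr rfl fun α _ => ?_
        have h5 : (∑ i, (-(ε α * Btilde ↑(φ α (bG i)) ↑w)) * bG.repr (φ α v) i)
            = -(ε α) * ∑ i, Btilde ↑(φ α (bG i)) ↑w * bG.repr (φ α v) i := by
          rw [Finset.mul_sum]
          exact Finset.sum_congr rfl fun i _ => by ring
        rw [h5, hsum_lin]
        ring
      rw [hA, hB]
      have h6 : (∑ α, -(ε α * Btilde ↑(φ α (φ α v)) ↑w))
          = -∑ α, ε α * Btilde ↑(φ α (φ α v)) ↑w := by
        rw [← Finset.sum_neg_distrib]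
      rw [h6, sub_neg_eq_add]
    have big2 : (∑ β, bL.repr ((nabla.flip (nabla ↑v ↑w) - nabla ↑v ∘ₗ nabla.flip ↑w
          + nabla.flip ↑w ∘ₗ LieAlgebra.ad ℝ L ↑v) (e β)) (Sum.inr β))
        = ∑ β, (-(ε β * Btilde ↑(φ β (φ β v)) ↑w)) := by
      refine Finset.sum_congr rfl fun β _ => ?_
      rw [hTr β, hAr]
    rw [big1, big2]
    have hcancel : (∑ α, ε α * Btilde ↑(φ α (φ α v)) ↑w)
        + (∑ β, (-(ε β * Btilde ↑(φ β (φ β v)) ↑w))) = 0 := by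
      rw [← Finset.sum_add_distrib]
      simp
    rw [add_assoc, hcancel, add_zero, ← Finset.sum_neg_distrib]
    exact Finset.sum_congr rfl fun α _ => by ring
  -- ric(v, e γ) = 0
  have ric2 : ∀ (v : ↥G) γ, ricci nabla (↑v) (e γ) = 0 := by
    intro v γ
    show LinearMap.trace ℝ L _ = _
    rw [htrL]
    have hTl : ∀ u : ↥G,
        (nabla.flip (nabla ↑v (e γ)) - nabla ↑v ∘ₗ nabla.flip (e γ)
          + nabla.flip (e γ) ∘ₗ LieAlgebra.ad ℝ L ↑v) (↑u)
        = (∑ α, (-(ε α * Btilde ↑(φ α u) ↑(φ γ v))) • e α)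
          - (∑ α, (-(ε α * Btilde ↑(φ α v) ↑(φ γ u))) • e α) := by
      intro u
      rw [hEval, hbr1 v u, map_zero, LinearMap.zero_apply, add_zero, hnB γ v, hnB γ u,
        hnA u (φ γ v), hnA v (φ γ u)]
    have hTr : ∀ β,
        (nabla.flip (nabla ↑v (e γ)) - nabla ↑v ∘ₗ nabla.flip (e γ)
          + nabla.flip (e γ) ∘ₗ LieAlgebra.ad ℝ L ↑v) (e β)
        = ↑(φ γ (φ β v)) := by
      intro β
      rw [hEval, hbr3 β v, hnB γ v, hnC β (φ γ v), hnD β γ, map_zero, hnB γ (φ β v)]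
      simp
    have big1 : (∑ i, bL.repr ((nabla.flip (nabla ↑v (e γ)) - nabla ↑v ∘ₗ nabla.flip (e γ)
          + nabla.flip (e γ) ∘ₗ LieAlgebra.ad ℝ L ↑v) (↑(bG i))) (Sum.inl i)) = 0 := by
      refine Finset.sum_eq_zero fun i _ => ?_
      rw [hTl (bG i), map_sub, Finsupp.sub_apply, hAl0, hAl0, sub_zero]
    have big2 : (∑ β, bL.repr ((nabla.flip (nabla ↑v (e γ)) - nabla ↑v ∘ₗ nabla.flip (e γ)
          + nabla.flip (e γ) ∘ₗ LieAlgebra.ad ℝ L ↑v) (e β)) (Sum.inr β)) = 0 := by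
      refine Finset.sum_eq_zero fun β _ => ?_
      rw [hTr β, hRr0]
    rw [big1, big2, add_zero]
  -- ric(e α, w) = 0
  have ric2' : ∀ α (w : ↥G), ricci nabla (e α) (↑w) = 0 := by
    intro α w
    show LinearMap.trace ℝ L _ = _
    rw [htrL]
    have hTl : ∀ u : ↥G,
        (nabla.flip (nabla (e α) ↑w) - nabla (e α) ∘ₗ nabla.flip ↑w
          + nabla.flip ↑w ∘ₗ LieAlgebra.ad ℝ L (e α)) (↑u)
        = -(∑ β, (-(ε β * Btilde ↑(φ β (φ α u)) ↑w)) • e β) := by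
      intro u
      rw [hEval, hnC α w, map_zero, hbr2 α u]
      have h1 : nabla (e α) (nabla ↑u ↑w) = 0 := by
        rw [hnA u w, map_sum]
        refine Finset.sum_eq_zero fun β _ => ?_
        rw [map_smul, hnD α β, smul_zero]
      have h2 : nabla (-(↑(φ α u) : L)) ↑w = -(nabla (↑(φ α u) : L) ↑w) := by
        rw [map_neg, LinearMap.neg_apply]
      rw [h1, h2, hnA (φ α u) w]
      simp
    have hTr : ∀ β,
        (nabla.flip (nabla (e α) ↑w) - nabla (e α) ∘ₗ nabla.flip ↑w
          + nabla.flip ↑w ∘ₗ LieAlgebra.ad ℝ L (e α)) (e β)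
        = 0 := by
      intro β
      rw [hEval, hnC α w, map_zero, hnC β w, map_zero, hAabelian α β, map_zero]
      simp
    have big1 : (∑ i, bL.repr ((nabla.flip (nabla (e α) ↑w) - nabla (e α) ∘ₗ nabla.flip ↑w
          + nabla.flip ↑w ∘ₗ LieAlgebra.ad ℝ L (e α)) (↑(bG i))) (Sum.inl i)) = 0 := by
      refine Finset.sum_eq_zero fun i _ => ?_
      rw [hTl (bG i), map_neg, Finsupp.neg_apply, hAl0, neg_zero]
    have big2 : (∑ β, bL.repr ((nabla.flip (nabla (e α) ↑w) - nabla (e α) ∘ₗ nabla.flip ↑w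
          + nabla.flip ↑w ∘ₗ LieAlgebra.ad ℝ L (e α)) (e β)) (Sum.inr β)) = 0 := by
      refine Finset.sum_eq_zero fun β _ => ?_
      rw [hTr β, map_zero, Finsupp.coe_zero, Pi.zero_apply]
    rw [big1, big2, add_zero]
  -- ric(e α, e γ) = -Tr(φ γ ∘ φ α)
  have ric3 : ∀ α γ, ricci nabla (e α) (e γ)
      = -(LinearMap.trace ℝ ↥G (φ γ ∘ₗ φ α)) := by
    intro α γ
    show LinearMap.trace ℝ L _ = _
    rw [htrL]
    have hTl : ∀ u : ↥G,
        (nabla.flip (nabla (e α) (e γ)) - nabla (e α) ∘ₗ nabla.flip (e γ)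
          + nabla.flip (e γ) ∘ₗ LieAlgebra.ad ℝ L (e α)) (↑u)
        = ↑(-(φ γ (φ α u))) := by
      intro u
      rw [hEval, hnD α γ, map_zero, hnB γ u, hnC α (φ γ u), hbr2 α u]
      have h2 : nabla (-(↑(φ α u) : L)) (e γ) = -(nabla (↑(φ α u) : L) (e γ)) := by
        rw [map_neg, LinearMap.neg_apply]
      rw [h2, hnB γ (φ α u)]
      simp
    have hTr : ∀ β,
        (nabla.flip (nabla (e α) (e γ)) - nabla (e α) ∘ₗ nabla.flip (e γ)
          + nabla.flip (e γ) ∘ₗ LieAlgebra.ad ℝ L (e α)) (e β)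
        = 0 := by
      intro β
      rw [hEval, hnD α γ, map_zero, hnD β γ, map_zero, hAabelian α β, map_zero]
      simp
    have big1 : (∑ i, bL.repr ((nabla.flip (nabla (e α) (e γ)) - nabla (e α) ∘ₗ nabla.flip (e γ)
          + nabla.flip (e γ) ∘ₗ LieAlgebra.ad ℝ L (e α)) (↑(bG i))) (Sum.inl i))
        = -(LinearMap.trace ℝ ↥G (φ γ ∘ₗ φ α)) := by
      rw [show (∑ i, bL.repr ((nabla.flip (nabla (e α) (e γ)) - nabla (e α) ∘ₗ nabla.flip (e γ)
          + nabla.flip (e γ) ∘ₗ LieAlgebra.ad ℝ L (e α)) (↑(bG i))) (Sum.inl i))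
          = ∑ i, -(bG.repr (φ γ (φ α (bG i))) i) from Finset.sum_congr rfl fun i _ => by
            rw [hTl (bG i), hRl, map_neg, Finsupp.neg_apply]]
      rw [htrG (φ γ ∘ₗ φ α), ← Finset.sum_neg_distrib]
      exact Finset.sum_congr rfl fun i _ => by rw [LinearMap.comp_apply]
    have big2 : (∑ β, bL.repr ((nabla.flip (nabla (e α) (e γ)) - nabla (e α) ∘ₗ nabla.flip (e γ)
          + nabla.flip (e γ) ∘ₗ LieAlgebra.ad ℝ L (e α)) (e β)) (Sum.inr β)) = 0 := by
      refine Finset.sum_eq_zero fun β _ => ?_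
      rw [hTr β, map_zero, Finsupp.coe_zero, Pi.zero_apply]
    rw [big1, big2, add_zero]
  -- the Ricci operator
  set Ric : L →ₗ[ℝ] L :=
    ((Btilde.toDual hBnondeg).symm.toLinearMap).comp (ricciBil nabla) with hRicDef
  have hRic : ∀ x y : L, Btilde (Ric x) y = ricci nabla x y := by
    intro x y
    rw [hRicDef]
    show Btilde ((Btilde.toDual hBnondeg).symm (ricciBil nabla x)) y = _
    rw [LinearMap.BilinForm.apply_toDual_symm_apply]
    rfl
  set ψ : ↥G →ₗ[ℝ] ↥G := ∑ α, (-(ε α * LinearMap.trace ℝ ↥G (φ α))) • φ α with hψdef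
  have hψcoe : ∀ v : ↥G, ((ψ v : L))
      = ∑ α, (-(ε α * LinearMap.trace ℝ ↥G (φ α))) • ((φ α v : L)) := by
    intro v
    rw [hψdef, LinearMap.sum_apply, AddSubmonoidClass.coe_finset_sum]
    exact Finset.sum_congr rfl fun α _ => by rw [LinearMap.smul_apply, SetLike.val_smul]
  have hRicG : ∀ v : ↥G, Ric ↑v = ↑(ψ v) := by
    intro v
    refine huniq _ _ (fun w => ?_) (fun β => ?_)
    · rw [hRic, ric1 v w]
      have hr : Btilde ((ψ v : L)) ↑w
          = ∑ α, (-(ε α * LinearMap.trace ℝ ↥G (φ α))) * Btilde ↑(φ α v) ↑w := by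
        rw [hψcoe v, map_sum, LinearMap.sum_apply]
        exact Finset.sum_congr rfl fun α _ => by
          rw [map_smul, LinearMap.smul_apply, smul_eq_mul]
      rw [hr, ← Finset.sum_neg_distrib]
      exact Finset.sum_congr rfl fun α _ => by ring
    · rw [hRic, ric2 v β]
      exact (hBGe (ψ v) β).symm
  have hRicA : ∀ α, Ric (e α)
      = ∑ β, (-(ε β * LinearMap.trace ℝ ↥G (φ β ∘ₗ φ α))) • e β := by
    intro α
    refine huniq _ _ (fun w => ?_) (fun γ => ?_)
    · rw [hRic, ric2' α w, map_sum, LinearMap.sum_apply]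
      symm
      refine Finset.sum_eq_zero fun β _ => ?_
      rw [map_smul, LinearMap.smul_apply, smul_eq_mul, hBeG, mul_zero]
    · rw [hRic, ric3 α γ, map_sum, LinearMap.sum_apply]
      have hr : ∀ β, Btilde ((-(ε β * LinearMap.trace ℝ ↥G (φ β ∘ₗ φ α))) • e β) (e γ)
          = (-(ε β * LinearMap.trace ℝ ↥G (φ β ∘ₗ φ α))) * (if β = γ then ε β else 0) := by
        intro β
        rw [map_smul, LinearMap.smul_apply, smul_eq_mul, horthA]
      rw [Finset.sum_congr rfl fun β _ => hr β]
      rw [Finset.sum_eq_single γ (fun β _ hβ => by rw [if_neg hβ, mul_zero])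
        (fun h => absurd (Finset.mem_univ γ) h)]
      rw [if_pos rfl]
      have := hε2 γ
      linear_combination (LinearMap.trace ℝ ↥G (φ γ ∘ₗ φ α)) * this
  -- trace of Ric in the adapted basis
  have hfinal1 : LinearMap.trace ℝ L Ric
      = (∑ i, bG.repr (ψ (bG i)) i)
        + ∑ α, (-(ε α * LinearMap.trace ℝ ↥G (φ α ∘ₗ φ α))) := by
    rw [htrL Ric]
    congr 1
    · exact Finset.sum_congr rfl fun i _ => by rw [hRicG (bG i), hRl]
    · exact Finset.sum_congr rfl fun α _ => by rw [hRicA α, hAr]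
  have hψtr : (∑ i, bG.repr (ψ (bG i)) i)
      = ∑ α, -(ε α * LinearMap.trace ℝ ↥G (φ α)) * LinearMap.trace ℝ ↥G (φ α) := by
    rw [← htrG ψ, hψdef, map_sum]
    exact Finset.sum_congr rfl fun α _ => by rw [map_smul, smul_eq_mul]
  -- the scalar curvature is the trace of Ric
  have hreprf : ∀ (x : L) j, f.repr x j = δ j * Btilde x (f j) := by
    intro x j
    have h1 : Btilde x (f j) = f.repr x j * δ j := by
      conv_lhs => rw [← f.sum_repr x]
      rw [map_sum, LinearMap.sum_apply]
      have hterm : ∀ i, Btilde ((f.repr x i) • f i) (f j)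
          = (f.repr x i) * (if i = j then δ i else 0) := fun i => by
        rw [map_smul, LinearMap.smul_apply, smul_eq_mul, horthf]
      rw [Finset.sum_congr rfl fun i _ => hterm i]
      rw [Finset.sum_eq_single j (fun i _ hi => by rw [if_neg hi, mul_zero])
        (fun h => absurd (Finset.mem_univ j) h)]
      rw [if_pos rfl]
    rw [h1]
    rcases hδ j with h | h <;> rw [h] <;> ring
  have hs2 : (∑ i, δ i * ricci nabla (f i) (f i)) = LinearMap.trace ℝ L Ric := by
    rw [htrgen _ f Ric]
    refine Finset.sum_congr rfl fun i _ => ?_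
    rw [hreprf (Ric (f i)) i, hRic]
  rw [hs2, hfinal1, hψtr, ← Finset.sum_add_distrib, ← Finset.sum_neg_distrib]
  refine Finset.sum_congr rfl fun α _ => ?_
  ring
end
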